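/- arXiv:2305.13569 — 6 statements merged into one kernel-verified Lean document; each statement's English description precedes it below -/
import Mathlib

section
/- Let G be a finite connected multigraph with spanning tree T0. Then det(Mesh(G,T0)) = ST(G), the total number of spanning trees of G; in particular det(Mesh(G,T0)) is independent of the choice of spanning tree T0 and of the choices of edge directions. -/
open scoped Classical
open Polynomial BigOperators Matrix

namespace Mesh

variable {V E : Type}

/-- One undirected step between vertices along an edge in `S`. -/
def Step (src tgt : E → V) (S : Finset E) (a b : V) : Prop :=
  ∃ e ∈ S, (src e = a ∧ tgt e = b) ∨ (src e = b ∧ tgt e = a)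

/-- Reachability within the subgraph with edge set `S`. -/
def Reach (src tgt : E → V) (S : Finset E) (a b : V) : Prop :=
  Relation.EqvGen (Step src tgt S) a b

/-- The spanning subgraph with edge set `S` is connected. -/
def ConnectedVia (src tgt : E → V) (S : Finset E) : Prop :=
  ∀ a b : V, Reach src tgt S a b

/-- `S` is the edge set of a spanning tree: connected and `|V| - 1` edges. -/
def IsSpanningTree [Fintype V] (src tgt : E → V) (S : Finset E) : Prop :=
  ConnectedVia src tgt S ∧ S.card + 1 = Fintype.card V

/-- Number of spanning trees of the multigraph `(V, E, src, tgt)`. -/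
noncomputable def ST [Fintype V] (src tgt : E → V) : ℕ :=
  Nat.card {S : Finset E // IsSpanningTree src tgt S}

/-- `ST_j(G, T0)`: number of spanning trees having exactly `j` edges outside `T0`. -/
noncomputable def STj [Fintype V] [DecidableEq E] (src tgt : E → V) (T0 : Finset E) (j : ℕ) : ℕ :=
  Nat.card {S : Finset E // IsSpanningTree src tgt S ∧ (S \ T0).card = j}

/-- Boundary of an integral 1-chain. -/
def bdry [Fintype E] [DecidableEq V] (src tgt : E → V) (c : E → ℤ) : V → ℤ :=
  fun v => ∑ e, c e * ((if tgt e = v then 1 else 0) - (if src e = v then 1 else 0))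

/-- The fundamental cycle `Z[j] = e_j + D(e_j)`. -/
def Zchain [DecidableEq E] (T0 : Finset E) (D : {e : E // e ∉ T0} → E → ℤ)
    (j : {e : E // e ∉ T0}) : E → ℤ :=
  fun e => (if e = (j : E) then 1 else 0) + D j e

/-- `D` assigns to each non-tree edge the (unique) chain supported in the tree `T0`
making `Z[j] = e_j + D(e_j)` a cycle; for a spanning tree this characterizes the
signed sum of edges of the tree path from the head to the tail of `e_j`. -/
def IsPathData [Fintype V] [Fintype E] [DecidableEq V] [DecidableEq E]
    (src tgt : E → V) (T0 : Finset E) (D : {e : E // e ∉ T0} → E → ℤ) : Prop :=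
  (∀ j f, D j f ≠ 0 → f ∈ T0) ∧ ∀ j, bdry src tgt (Zchain T0 D j) = 0

/-- The mesh matrix `Mesh(G,T0)` with entries `⟨Z[j₁], Z[j₂]⟩`. -/
noncomputable def MeshM [Fintype E] [DecidableEq E] (T0 : Finset E)
    (D : {e : E // e ∉ T0} → E → ℤ) :
    Matrix {e : E // e ∉ T0} {e : E // e ∉ T0} ℤ :=
  Matrix.of fun j₁ j₂ => ∑ e, Zchain T0 D j₁ e * Zchain T0 D j₂ e

/-- The matrix `Y` of the map `D` in the edge bases. -/
noncomputable def Ymat [DecidableEq E] (T0 : Finset E) (D : {e : E // e ∉ T0} → E → ℤ) :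
    Matrix {f : E // f ∈ T0} {e : E // e ∉ T0} ℤ :=
  Matrix.of fun k j => D j (k : E)

/-- The Kirchhoff Laplacian `Deg - Adj` of a multigraph. -/
noncomputable def LapDegAdj {V' E' : Type} [Fintype E'] [DecidableEq V'] (s t : E' → V') :
    Matrix V' V' ℤ :=
  Matrix.of fun a b =>
    (if a = b then
        ((Finset.univ.filter fun e => s e = a).card + (Finset.univ.filter fun e => t e = a).card : ℤ)
      else 0)
    - ((Finset.univ.filter fun e => (s e = a ∧ t e = b) ∨ (s e = b ∧ t e = a)).card : ℤ)

/-- The incidence coefficient of vertex `v` in `∂e`. -/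
def inc [DecidableEq V] (src tgt : E → V) (e : E) (v : V) : ℤ :=
  (if tgt e = v then 1 else 0) - (if src e = v then 1 else 0)

/-- Source map of the cone `C'(H)`: vertices `Option V` (with `none = W`),
edges `E ⊕ V` (`inl` the edges of `H`, `inr P` the cone edge `P → W`). -/
def coneSrc (src : E → V) : E ⊕ V → Option V
  | Sum.inl e => some (src e)
  | Sum.inr p => some p

/-- Target map of the cone `C'(H)`. -/
def coneTgt (tgt : E → V) : E ⊕ V → Option V
  | Sum.inl e => some (tgt e)
  | Sum.inr _ => none

/-- The edge set of the cone subgraph `C(V(H))` of `C'(H)`. -/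
noncomputable def coneTree (E V : Type) [Fintype E] [Fintype V] : Finset (E ⊕ V) :=
  Finset.univ.filter fun x => x.isRight = true

/-- The tree chain `D(e) = (Q → W) - (P → W)` for the pair `(C'(H), C(V(H)))`. -/
def coneD [DecidableEq V] [DecidableEq E] (src tgt : E → V) (e : E) : E ⊕ V → ℤ :=
  fun x => (if x = Sum.inr (tgt e) then 1 else 0) - (if x = Sum.inr (src e) then 1 else 0)

/-- The boundary map as a homomorphism of abelian groups. -/
noncomputable def bdryHom [Fintype E] [DecidableEq V] (src tgt : E → V) :
    (E → ℤ) →+ (V → ℤ) where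
  toFun := bdry src tgt
  map_zero' := by funext v; simp [bdry]
  map_add' := by
    intro a b
    funext v
    simp [bdry, add_mul, Finset.sum_add_distrib]

/-- `Π ∘ ∂*` : the composition of the coboundary with the identification `Π`. -/
noncomputable def cobdryHom (src tgt : E → V) : (V → ℤ) →+ (E → ℤ) where
  toFun := fun g e => g (tgt e) - g (src e)
  map_zero' := by funext e; simp
  map_add' := by
    intro a b
    funext e
    simp only [Pi.add_apply]
    ring

/-- The reachability setoid of the spanning subgraph with edge set `F`. -/
def reachSetoid (src tgt : E → V) (F : Finset E) : Setoid V :=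
  ⟨Relation.EqvGen (Step src tgt F), Relation.EqvGen.is_equivalence _⟩

/-- Number of connected components of the spanning subgraph with edge set `F`. -/
noncomputable def ncomp (src tgt : E → V) (F : Finset E) : ℕ :=
  Nat.card (Quotient (reachSetoid src tgt F))

/-- `F` is (the edge set of) a spanning forest. -/
def IsSpForest [Fintype V] (src tgt : E → V) (F : Finset E) : Prop :=
  F.card + ncomp src tgt F = Fintype.card V

/-- `mult(F)`: the product of the numbers of vertices of the components of `F`. -/
noncomputable def multF (src tgt : E → V) (F : Finset E) : ℕ :=
  ∏ᶠ q : Quotient (reachSetoid src tgt F),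
    Nat.card {v : V // Quotient.mk (reachSetoid src tgt F) v = q}

/-- `(F, R)` is a rooted spanning forest: `R` has exactly one root in each component. -/
def IsRootedSF [Fintype V] (src tgt : E → V) (F : Finset E) (R : Finset V) : Prop :=
  IsSpForest src tgt F ∧
    ∀ v : V, ∃! u : V, u ∈ R ∧ Relation.EqvGen (Step src tgt F) u v

/-- The polynomial `ST(G,H)(X) = Σ_{j=0}^{N} (-1)^j ST_j(G,H) X^{N-j}`, `N = |E(G)-E(H)|`. -/
noncomputable def STpoly [Fintype V] [Fintype E] [DecidableEq E] (src tgt : E → V)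
    (HE : Finset E) : Polynomial ℤ :=
  ∑ j ∈ Finset.range (HEᶜ.card + 1),
    Polynomial.C ((-1 : ℤ) ^ j * (STj src tgt HE j : ℤ)) * Polynomial.X ^ (HEᶜ.card - j)

/-- The vertex map of the contraction `G/e₀`: `src e₀` is identified with `tgt e₀`. -/
def contrV [DecidableEq V] (src tgt : E → V) (e0 : E) (h : src e0 ≠ tgt e0) (v : V) :
    {w : V // w ≠ src e0} :=
  if hv : v = src e0 then ⟨tgt e0, Ne.symm h⟩ else ⟨v, hv⟩

/-- Source of a directed edge `(e, b)` (`b = true`: the chosen direction). -/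
def dsrc (src tgt : E → V) (x : E × Bool) : V := if x.2 then src x.1 else tgt x.1

/-- Target of a directed edge `(e, b)`. -/
def dtgt (src tgt : E → V) (x : E × Bool) : V := if x.2 then tgt x.1 else src x.1

/-- A non-tree edge is of type 3 when its tree path has length ≥ 2. -/
noncomputable def Type3 [Fintype E] (T0 : Finset E) (D : {e : E // e ∉ T0} → E → ℤ)
    (j : {e : E // e ∉ T0}) : Prop :=
  2 ≤ (Finset.univ.filter fun f => D j f ≠ 0).card



section Aux
set_option linter.unusedSectionVars false
open Finset Equiv Matrix

variable {R : Type} [CommRing R] {n m : Type} [Fintype n] [Fintype m] [DecidableEq n] [DecidableEq m]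

noncomputable def enumS (n : Type) [Fintype n] (S : Finset m) (h : S.card = Fintype.card n) :
    n ≃ {x // x ∈ S} :=
  Fintype.equivOfCardEq (by rw [Fintype.card_coe, h])

/-- The product of the two minors of `A`, `B` at columns/rows `S`, when `S` has the right size. -/
noncomputable def minorProd (A : Matrix n m R) (B : Matrix m n R) (S : Finset m) : R :=
  if h : S.card = Fintype.card n then
    (A.submatrix id (fun i => (enumS n S h i : m))).det *
      (B.submatrix (fun i => (enumS n S h i : m)) id).det
  else 0

local notation "ε " σ:arg => ((Equiv.Perm.sign σ : ℤ) : R)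

theorem cb_aux {A : Matrix n m R} {B : Matrix m n R} {p : n → m} (H : ¬Function.Injective p) :
    (∑ σ : Equiv.Perm n, ε σ * ∏ x, A (σ x) (p x) * B (p x) x) = 0 := by
  obtain ⟨i, j, hpij, hij⟩ : ∃ i j, p i = p j ∧ i ≠ j := by
    rw [Function.Injective] at H
    push_neg at H
    obtain ⟨i, j, h1, h2⟩ := H
    exact ⟨i, j, h1, h2⟩
  exact
    Finset.sum_involution (fun σ _ => σ * Equiv.swap i j)
      (fun σ _ => by
        have : (∏ x, A (σ x) (p x)) = ∏ x, A ((σ * Equiv.swap i j) x) (p x) :=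
          Fintype.prod_equiv (Equiv.swap i j) _ _ (by simp [Equiv.apply_swap_eq_self hpij])
        simp [this, Equiv.Perm.sign_swap hij, -Equiv.Perm.sign_swap', Finset.prod_mul_distrib])
      (fun σ _ _ => (not_congr Equiv.mul_swap_eq_iff).mpr hij) (fun _ _ => Finset.mem_univ _)
      fun σ _ => Equiv.mul_swap_involutive i j σ


section CB
set_option linter.unusedSectionVars false

theorem sum_perm_eq (M N : Matrix n n R) :
    ∑ τ : Equiv.Perm n, ∑ σ : Equiv.Perm n, ε σ * ∏ i, M (σ i) (τ i) * N (τ i) i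
      = Matrix.det M * Matrix.det N := by
  rw [← Matrix.det_mul]
  refine Eq.symm ?_
  calc
    det (M * N) = ∑ p : n → n, ∑ σ : Equiv.Perm n, ε σ * ∏ i, M (σ i) (p i) * N (p i) i := by
      simp only [det_apply', mul_apply, prod_univ_sum, mul_sum, Fintype.piFinset_univ]
      rw [Finset.sum_comm]
    _ = ∑ p ∈ univ.filter Function.Injective,
          ∑ σ : Equiv.Perm n, ε σ * ∏ i, M (σ i) (p i) * N (p i) i := by
      refine (sum_subset (filter_subset _ _) fun f _ hinj => cb_aux ?_).symm
      simpa only [true_and, mem_filter, mem_univ] using hinj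
    _ = ∑ τ : Equiv.Perm n, ∑ σ : Equiv.Perm n, ε σ * ∏ i, M (σ i) (τ i) * N (τ i) i := by
      refine sum_bij (fun p h => Equiv.ofBijective p
        ((Finite.injective_iff_bijective).1 (mem_filter.1 h).2)) (fun _ _ => mem_univ _)
        (fun _ _ _ _ h => by injection h)
        (fun b _ => ⟨b, mem_filter.2 ⟨mem_univ _, b.injective⟩, Equiv.coe_fn_injective rfl⟩)
        fun _ _ => rfl

theorem cauchy_binet (A : Matrix n m R) (B : Matrix m n R) :
    (A * B).det = ∑ S : Finset m, minorProd A B S := by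
  have key : ∀ S ∈ univ.filter (fun S : Finset m => S.card = Fintype.card n),
      ∑ p ∈ (univ.filter (Function.Injective (α := n) (β := m))).filter
          (fun p => univ.image p = S),
        ∑ σ : Equiv.Perm n, ε σ * ∏ i, A (σ i) (p i) * B (p i) i
      = minorProd A B S := by
    intro S hS
    rw [mem_filter] at hS
    have h : S.card = Fintype.card n := hS.2
    set es : n ≃ {x // x ∈ S} := enumS n S h with hes
    have hsum : ∑ p ∈ (univ.filter (Function.Injective (α := n) (β := m))).filter
          (fun p => univ.image p = S),
        ∑ σ : Equiv.Perm n, ε σ * ∏ i, A (σ i) (p i) * B (p i) i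
        = ∑ τ : Equiv.Perm n,
            ∑ σ : Equiv.Perm n, ε σ * ∏ i, A (σ i) ((es (τ i) : m)) * B ((es (τ i) : m)) i := by
      refine (sum_bij (fun (τ : Equiv.Perm n) _ => fun i => (es (τ i) : m)) ?_ ?_ ?_ ?_).symm
      · intro τ _
        simp only [mem_filter, mem_univ, true_and]
        constructor
        · intro a b hab
          exact τ.injective (es.injective (Subtype.ext hab))
        · ext x
          simp only [mem_image, mem_univ, true_and]
          constructor
          · rintro ⟨i, rfl⟩; exact (es (τ i)).2
          · intro hx
            exact ⟨τ.symm (es.symm ⟨x, hx⟩), by simp⟩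
      · intro τ1 _ τ2 _ hfun
        ext i
        exact es.injective (Subtype.ext (congrFun hfun i))
      · intro p hp
        rw [mem_filter, mem_filter] at hp
        obtain ⟨⟨-, hinj⟩, himg⟩ := hp
        have hmem : ∀ i, p i ∈ S := by
          intro i; rw [← himg]; exact mem_image_of_mem _ (mem_univ _)
        have hφinj : Function.Injective (fun i => es.symm ⟨p i, hmem i⟩) := by
          intro a b hab
          exact hinj (congrArg Subtype.val (es.symm.injective hab))
        refine ⟨Equiv.ofBijective _ ((Finite.injective_iff_bijective).1 hφinj), mem_univ _, ?_⟩
        funext i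
        simp [Equiv.ofBijective_apply]
      · intro τ _; rfl
    rw [hsum, minorProd, dif_pos h]
    have := sum_perm_eq (R := R)
      (A.submatrix id (fun i => (enumS n S h i : m)))
      (B.submatrix (fun i => (enumS n S h i : m)) id)
    rw [← this]
    rfl
  calc
    (A * B).det = ∑ p : n → m, ∑ σ : Equiv.Perm n, ε σ * ∏ i, A (σ i) (p i) * B (p i) i := by
      simp only [det_apply', mul_apply, prod_univ_sum, mul_sum, Fintype.piFinset_univ]
      rw [Finset.sum_comm]
    _ = ∑ p ∈ univ.filter Function.Injective,
          ∑ σ : Equiv.Perm n, ε σ * ∏ i, A (σ i) (p i) * B (p i) i := by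
      refine (sum_subset (filter_subset _ _) fun f _ hinj => cb_aux ?_).symm
      simpa only [true_and, mem_filter, mem_univ] using hinj
    _ = ∑ S ∈ univ.filter (fun S : Finset m => S.card = Fintype.card n),
          ∑ p ∈ (univ.filter (Function.Injective (α := n) (β := m))).filter
            (fun p => univ.image p = S),
          ∑ σ : Equiv.Perm n, ε σ * ∏ i, A (σ i) (p i) * B (p i) i := by
      refine (sum_fiberwise_of_maps_to ?_ _).symm
      intro p hp
      rw [mem_filter] at hp ⊢
      refine ⟨mem_univ _, ?_⟩
      rw [card_image_of_injective _ hp.2, card_univ]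
    _ = ∑ S ∈ univ.filter (fun S : Finset m => S.card = Fintype.card n), minorProd A B S :=
      sum_congr rfl key
    _ = ∑ S : Finset m, minorProd A B S := by
      refine sum_subset (filter_subset _ _) fun S _ hS => ?_
      rw [mem_filter, not_and] at hS
      rw [minorProd, dif_neg (hS (mem_univ _))]
end CB


section Graph

variable (src tgt : E → V)

variable [DecidableEq V] [DecidableEq E]

theorem eqvGen_le {α : Type} {r s : α → α → Prop} (hs : Equivalence s)
    (h : ∀ a b, r a b → s a b) {a b : α} (hr : Relation.EqvGen r a b) : s a b := by
  induction hr with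
  | rel a b h' => exact h _ _ h'
  | refl => exact hs.refl _
  | symm _ _ _ ih => exact hs.symm ih
  | trans _ _ _ _ _ ih1 ih2 => exact hs.trans ih1 ih2

theorem step_mono {S T : Finset E} (h : S ⊆ T) {a b : V} (hs : Step src tgt S a b) :
    Step src tgt T a b := by
  obtain ⟨e, he, hd⟩ := hs; exact ⟨e, h he, hd⟩

theorem reach_mono {S T : Finset E} (h : S ⊆ T) {a b : V} (hr : Reach src tgt S a b) :
    Reach src tgt T a b :=
  Relation.EqvGen.mono (fun x y (hs : Step src tgt S x y) => step_mono src tgt h hs) _ _ hr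

theorem reach_equivalence (S : Finset E) : Equivalence (Reach src tgt S) :=
  Relation.EqvGen.is_equivalence _

theorem reach_insert_cases {S : Finset E} {e : E} {a b : V}
    (h : Reach src tgt (insert e S) a b) :
    Reach src tgt S a b ∨
      ((Reach src tgt S a (src e) ∨ Reach src tgt S a (tgt e)) ∧
        (Reach src tgt S b (src e) ∨ Reach src tgt S b (tgt e))) := by
  set R : V → V → Prop := fun a b =>
    Reach src tgt S a b ∨
      ((Reach src tgt S a (src e) ∨ Reach src tgt S a (tgt e)) ∧
        (Reach src tgt S b (src e) ∨ Reach src tgt S b (tgt e))) with hR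
  have hre := reach_equivalence src tgt S
  have hequiv : Equivalence R := by
    constructor
    · intro x; exact Or.inl (hre.refl x)
    · intro x y hxy
      rcases hxy with h1 | ⟨h1, h2⟩
      · exact Or.inl (hre.symm h1)
      · exact Or.inr ⟨h2, h1⟩
    · intro x y z hxy hyz
      rcases hxy with h1 | ⟨h1, h2⟩
      · rcases hyz with h3 | ⟨h3, h4⟩
        · exact Or.inl (hre.trans h1 h3)
        · refine Or.inr ⟨?_, h4⟩
          rcases h3 with h3 | h3
          · exact Or.inl (hre.trans h1 h3)
          · exact Or.inr (hre.trans h1 h3)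
      · rcases hyz with h3 | ⟨h3, h4⟩
        · refine Or.inr ⟨h1, ?_⟩
          rcases h2 with h2 | h2
          · exact Or.inl (hre.trans (hre.symm h3) h2)
          · exact Or.inr (hre.trans (hre.symm h3) h2)
        · exact Or.inr ⟨h1, h4⟩
  refine eqvGen_le hequiv ?_ h
  rintro x y ⟨f, hf, hd⟩
  rcases Finset.mem_insert.1 hf with rfl | hfS
  · rcases hd with ⟨hx, hy⟩ | ⟨hx, hy⟩
    · subst hx; subst hy; exact Or.inr ⟨Or.inl (hre.refl _), Or.inr (hre.refl _)⟩
    · subst hx; subst hy; exact Or.inr ⟨Or.inr (hre.refl _), Or.inl (hre.refl _)⟩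
  · exact Or.inl (Relation.EqvGen.rel _ _ ⟨f, hfS, hd⟩)

theorem ncomp_le_ncomp_insert [Finite V] (S : Finset E) (e : E) :
    ncomp src tgt S ≤ ncomp src tgt (insert e S) + 1 := by
  classical
  set s1 := reachSetoid src tgt S
  set s2 := reachSetoid src tgt (insert e S)
  have hwd : ∀ v w : V, Reach src tgt S v w →
      (if Reach src tgt S v (src e) then (none : Option (Quotient s2))
        else some (Quotient.mk s2 v)) =
      (if Reach src tgt S w (src e) then (none : Option (Quotient s2))
        else some (Quotient.mk s2 w)) := by
    intro v w hvw
    have hre := reach_equivalence src tgt S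
    by_cases hv : Reach src tgt S v (src e)
    · rw [if_pos hv, if_pos (hre.trans (hre.symm hvw) hv)]
    · rw [if_neg hv, if_neg (fun hw => hv (hre.trans hvw hw))]
      exact congrArg some (Quotient.sound (reach_mono src tgt (Finset.subset_insert e S) hvw))
  set ψ : Quotient s1 → Option (Quotient s2) :=
    Quotient.lift (fun v => if Reach src tgt S v (src e) then (none : Option (Quotient s2))
      else some (Quotient.mk s2 v)) hwd with hψ
  have hinj : Function.Injective ψ := by
    intro x y
    induction x using Quotient.ind
    induction y using Quotient.ind
    rename_i v w
    intro hxy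
    have hre := reach_equivalence src tgt S
    change (if Reach src tgt S v (src e) then (none : Option (Quotient s2)) else some (Quotient.mk s2 v)) =
      (if Reach src tgt S w (src e) then (none : Option (Quotient s2)) else some (Quotient.mk s2 w)) at hxy
    by_cases hv : Reach src tgt S v (src e) <;> by_cases hw : Reach src tgt S w (src e)
    · exact Quotient.sound (hre.trans hv (hre.symm hw))
    · rw [if_pos hv, if_neg hw] at hxy; exact absurd hxy (by simp)
    · rw [if_neg hv, if_pos hw] at hxy; exact absurd hxy (by simp)
    · rw [if_neg hv, if_neg hw] at hxy
      have h2 : Quotient.mk s2 v = Quotient.mk s2 w := by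
        simpa using hxy
      have h3 : Reach src tgt (insert e S) v w := Quotient.exact h2
      refine Quotient.sound ?_
      rcases reach_insert_cases src tgt h3 with h4 | ⟨h4, h5⟩
      · exact h4
      · rcases h4 with h4 | h4
        · exact absurd h4 hv
        · rcases h5 with h5 | h5
          · exact absurd h5 hw
          · exact hre.trans h4 (hre.symm h5)
  haveI : Finite (Quotient s2) :=
    Finite.of_surjective (Quotient.mk s2) (fun q => Quotient.exists_rep q)
  haveI : Fintype (Quotient s2) := Fintype.ofFinite _
  calc ncomp src tgt S ≤ Nat.card (Option (Quotient s2)) :=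
        Nat.card_le_card_of_injective ψ hinj
    _ = ncomp src tgt (insert e S) + 1 := Finite.card_option

theorem ncomp_empty [Fintype V] : ncomp src tgt (∅ : Finset E) = Fintype.card V := by
  have h : ∀ a b : V, Reach src tgt ∅ a b → a = b := by
    intro a b h
    refine eqvGen_le eq_equivalence ?_ h
    rintro x y ⟨f, hf, -⟩
    exact absurd hf (Finset.notMem_empty f)
  rw [ncomp, ← Nat.card_eq_fintype_card]
  refine Nat.card_eq_of_bijective (Quotient.mk _) ⟨?_, fun q => Quotient.exists_rep q⟩ |>.symm
  intro a b hab
  exact h a b (Quotient.exact hab)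

theorem card_le_card_add_ncomp [Fintype V] [Fintype E] (S : Finset E) :
    Fintype.card V ≤ S.card + ncomp src tgt S := by
  classical
  induction S using Finset.induction with
  | empty => rw [ncomp_empty]; simp
  | @insert e S he ih =>
      calc Fintype.card V ≤ S.card + ncomp src tgt S := ih
        _ ≤ S.card + (ncomp src tgt (insert e S) + 1) :=
            Nat.add_le_add_left (ncomp_le_ncomp_insert src tgt S e) _
        _ = (insert e S).card + ncomp src tgt (insert e S) := by
            rw [Finset.card_insert_of_notMem he]; ring

theorem connected_card_le [Fintype V] [Fintype E] {S : Finset E}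
    (h : ConnectedVia src tgt S) : Fintype.card V ≤ S.card + 1 := by
  refine le_trans (card_le_card_add_ncomp src tgt S) (Nat.add_le_add_left ?_ _)
  have : Subsingleton (Quotient (reachSetoid src tgt S)) := by
    constructor
    intro x y
    induction x using Quotient.ind
    induction y using Quotient.ind
    exact Quotient.sound (h _ _)
  exact (by
    have hfin : Finite (Quotient (reachSetoid src tgt S)) :=
      Finite.of_surjective (Quotient.mk _) (fun q => Quotient.exists_rep q)
    exact Finite.card_le_one_iff_subsingleton.2 this)

theorem erase_connected {T : Finset E} {f : E} (hT : ConnectedVia src tgt T)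
    (hreach : Reach src tgt (T.erase f) (src f) (tgt f)) :
    ConnectedVia src tgt (T.erase f) := by
  intro a b
  refine eqvGen_le (reach_equivalence src tgt (T.erase f)) ?_ (hT a b)
  rintro x y ⟨e, he, hd⟩
  by_cases hef : e = f
  · subst hef
    have hre := reach_equivalence src tgt (T.erase e)
    rcases hd with ⟨hx, hy⟩ | ⟨hx, hy⟩
    · exact hx ▸ hy ▸ hreach
    · exact hx ▸ hy ▸ hre.symm hreach
  · exact Relation.EqvGen.rel _ _ ⟨e, Finset.mem_erase.2 ⟨hef, he⟩, hd⟩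

theorem bridge [Fintype V] [Fintype E] {T : Finset E} {f : E}
    (hconn : ConnectedVia src tgt T) (hcard : T.card + 1 = Fintype.card V) (hf : f ∈ T) :
    ¬ Reach src tgt (T.erase f) (src f) (tgt f) := by
  intro h
  have h1 := connected_card_le src tgt (erase_connected src tgt hconn h)
  rw [Finset.card_erase_of_mem hf] at h1
  have h2 : 1 ≤ T.card := Finset.card_pos.2 ⟨f, hf⟩
  omega

end Graph

section Chains

variable (src tgt : E → V)

theorem bdry_eq_hom [Fintype E] [DecidableEq V] (c : E → ℤ) :
    bdry src tgt c = bdryHom src tgt c := rfl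

theorem sum_comm_bdry [Fintype V] [Fintype E] [DecidableEq V] (c : E → ℤ) (g : V → ℤ) :
    ∑ e, (g (tgt e) - g (src e)) * c e = ∑ v, g v * bdry src tgt c v := by
  unfold bdry
  simp_rw [Finset.mul_sum]
  rw [Finset.sum_comm]
  refine Finset.sum_congr rfl fun e _ => ?_
  have h1 : ∀ w : V, (∑ v, (g v * c e) * if w = v then (1:ℤ) else 0) = g w * c e := by
    intro w
    rw [Finset.sum_congr rfl (fun v _ => by rw [mul_ite, mul_one, mul_zero]),
      Finset.sum_ite_eq]
    simp
  calc (g (tgt e) - g (src e)) * c e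
      = (∑ v, (g v * c e) * if tgt e = v then (1:ℤ) else 0)
        - (∑ v, (g v * c e) * if src e = v then (1:ℤ) else 0) := by rw [h1, h1]; ring
    _ = ∑ v, ((g v * c e) * (if tgt e = v then (1:ℤ) else 0)
          - (g v * c e) * (if src e = v then (1:ℤ) else 0)) := (Finset.sum_sub_distrib _ _).symm
    _ = ∑ v, g v * (c e * ((if tgt e = v then (1:ℤ) else 0) - (if src e = v then 1 else 0))) :=
        Finset.sum_congr rfl fun v _ => by ring

theorem bdry_single [Fintype V] [Fintype E] [DecidableEq V] [DecidableEq E] (e : E) (t : ℤ) :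
    bdry src tgt (fun x => if x = e then t else 0)
      = fun v => t * ((if tgt e = v then 1 else 0) - (if src e = v then 1 else 0)) := by
  funext v
  unfold bdry
  rw [Finset.sum_eq_single e]
  · simp
  · intro x _ hx; simp [hx]
  · intro h; exact absurd (Finset.mem_univ e) h

theorem cycle_in_tree_zero [Fintype V] [Fintype E] [DecidableEq V] [DecidableEq E] {T : Finset E}
    (hconn : ConnectedVia src tgt T) (hcard : T.card + 1 = Fintype.card V)
    {c : E → ℤ} (hsupp : ∀ e, c e ≠ 0 → e ∈ T) (hc : bdry src tgt c = 0) :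
    c = 0 := by
  funext f
  show c f = 0
  by_cases hf : f ∈ T
  swap
  · by_contra hne; exact hf (hsupp f hne)
  set g : V → ℤ := fun v => if Reach src tgt (T.erase f) (src f) v then 1 else 0 with hg
  have hre := reach_equivalence src tgt (T.erase f)
  have h0 : ∑ e, (g (tgt e) - g (src e)) * c e = 0 := by
    rw [sum_comm_bdry, hc]; simp
  have hsingle : ∑ e, (g (tgt e) - g (src e)) * c e = (g (tgt f) - g (src f)) * c f := by
    refine Finset.sum_eq_single f ?_ (fun h => absurd (Finset.mem_univ f) h)
    intro e _ hef
    by_cases hce : c e = 0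
    · rw [hce, mul_zero]
    · have heT : e ∈ T.erase f := Finset.mem_erase.2 ⟨hef, hsupp e hce⟩
      have hstep : Reach src tgt (T.erase f) (src e) (tgt e) :=
        Relation.EqvGen.rel _ _ ⟨e, heT, Or.inl ⟨rfl, rfl⟩⟩
      have hgeq : g (tgt e) = g (src e) := by
        simp only [hg]
        by_cases h1 : Reach src tgt (T.erase f) (src f) (src e)
        · rw [if_pos (hre.trans h1 hstep), if_pos h1]
        · rw [if_neg (fun h2 => h1 (hre.trans h2 (hre.symm hstep))), if_neg h1]
      rw [hgeq, sub_self, zero_mul]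
  have hgsrc : g (src f) = 1 := by simp only [hg]; exact if_pos (hre.refl _)
  have hgtgt : g (tgt f) = 0 := by
    simp only [hg]; exact if_neg (bridge src tgt hconn hcard hf)
  rw [hsingle, hgtgt, hgsrc] at h0
  linarith

theorem exists_chain [Fintype V] [Fintype E] [DecidableEq V] [DecidableEq E] {T : Finset E}
    {a b : V} (h : Reach src tgt T a b) :
    ∃ d : E → ℤ, (∀ e, d e ≠ 0 → e ∈ T) ∧
      bdry src tgt d = fun v => (if b = v then 1 else 0) - (if a = v then 1 else 0) := by
  induction h with
  | rel x y hstep =>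
      obtain ⟨e, he, hd⟩ := hstep
      rcases hd with ⟨hx, hy⟩ | ⟨hx, hy⟩
      · refine ⟨fun z => if z = e then 1 else 0, ?_, ?_⟩
        · intro z hz
          by_cases h1 : z = e
          · subst h1; exact he
          · simp [h1] at hz
        · rw [bdry_single]
          funext v
          subst hx; subst hy
          ring
      · refine ⟨fun z => if z = e then -1 else 0, ?_, ?_⟩
        · intro z hz
          by_cases h1 : z = e
          · subst h1; exact he
          · simp [h1] at hz
        · rw [bdry_single]
          funext v
          subst hx; subst hy
          ring
  | refl x =>
      refine ⟨0, by simp, ?_⟩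
      funext v
      simp [bdry]
  | symm x y _ ih =>
      obtain ⟨d, h1, h2⟩ := ih
      refine ⟨-d, fun e he => h1 e (by simpa using he), ?_⟩
      have : bdry src tgt (-d) = -(bdry src tgt d) := by
        rw [bdry_eq_hom, bdry_eq_hom, map_neg]
      rw [this, h2]
      funext v
      simp only [Pi.neg_apply]
      ring
  | trans x y z _ _ ih1 ih2 =>
      obtain ⟨d1, h11, h12⟩ := ih1
      obtain ⟨d2, h21, h22⟩ := ih2
      refine ⟨d1 + d2, ?_, ?_⟩
      · intro e he
        by_cases h1 : d1 e = 0
        · refine h21 e ?_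
          intro h2
          exact he (by simp [Pi.add_apply, h1, h2])
        · exact h11 e h1
      · have : bdry src tgt (d1 + d2) = bdry src tgt d1 + bdry src tgt d2 := by
          rw [bdry_eq_hom, bdry_eq_hom, bdry_eq_hom, map_add]
        rw [this, h12, h22]
        funext v
        simp only [Pi.add_apply]
        ring

theorem exists_pathdata [Fintype V] [Fintype E] [DecidableEq V] [DecidableEq E] {T : Finset E}
    (hconn : ConnectedVia src tgt T) :
    ∃ D' : {e : E // e ∉ T} → E → ℤ, IsPathData src tgt T D' := by
  have h : ∀ j : {e : E // e ∉ T}, ∃ d : E → ℤ, (∀ e, d e ≠ 0 → e ∈ T) ∧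
      bdry src tgt d = fun v => (if src (j : E) = v then 1 else 0)
        - (if tgt (j : E) = v then 1 else 0) :=
    fun j => exists_chain src tgt (hconn (tgt (j : E)) (src (j : E)))
  choose d hd1 hd2 using h
  refine ⟨d, fun j f => hd1 j f, ?_⟩
  intro j
  have hsplit : Zchain T d j = (fun e => if e = (j : E) then (1:ℤ) else 0) + d j := rfl
  rw [hsplit]
  have hadd : bdry src tgt ((fun e => if e = (j : E) then (1:ℤ) else 0) + d j)
      = bdry src tgt (fun e => if e = (j : E) then (1:ℤ) else 0) + bdry src tgt (d j) := by
    rw [bdry_eq_hom, bdry_eq_hom, bdry_eq_hom, map_add]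
  rw [hadd, bdry_single, hd2 j]
  funext v
  simp only [Pi.add_apply, Pi.zero_apply]
  ring

end Chains

end Aux

/-- (Trent) `det(Mesh(G,T0)) = ST(G)`, the number of spanning trees of `G`;
in particular the determinant is independent of the choice of the spanning tree `T0`
and of the choices of edge directions. -/
theorem stmt1 {V E : Type} [Fintype V] [Fintype E] [DecidableEq V] [DecidableEq E]
    (src tgt : E → V) (hG : ConnectedVia src tgt Finset.univ)
    (T0 : Finset E) (hT0 : IsSpanningTree src tgt T0)
    (D : {e : E // e ∉ T0} → E → ℤ) (hD : IsPathData src tgt T0 D) :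
    (MeshM T0 D).det = (ST src tgt : ℤ) := by
  classical
  obtain ⟨hDsupp, hDcyc⟩ := hD
  obtain ⟨hT0conn, hT0card⟩ := hT0
  set Zm : Matrix E {e : E // e ∉ T0} ℤ := Matrix.of fun e j => Zchain T0 D j e with hZm
  -- the mesh matrix is `Zmᵀ * Zm`
  have hMesh : MeshM T0 D = Zmᵀ * Zm := by
    ext j1 j2
    rfl
  -- cardinality bookkeeping
  have hSle : ∀ S : Finset E, S.card ≤ Fintype.card E := fun S => Finset.card_le_univ S
  have hNn : Fintype.card {e : E // e ∉ T0} = Fintype.card E - T0.card := by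
    rw [Fintype.card_subtype_compl, Fintype.card_coe]
  have hcard_of : ∀ S : Finset E, IsSpanningTree src tgt Sᶜ → S.card = Fintype.card {e : E // e ∉ T0} := by
    intro S hST
    have h1 : Sᶜ.card + 1 = Fintype.card V := hST.2
    have h2 : Sᶜ.card = Fintype.card E - S.card := Finset.card_compl S
    have h3 := hSle S
    have h4 := hSle T0
    omega
  -- value of each Cauchy–Binet term
  have hterm : ∀ S : Finset E, minorProd Zmᵀ Zm S
      = if IsSpanningTree src tgt Sᶜ then (1 : ℤ) else 0 := by
    intro S
    by_cases hcard : S.card = Fintype.card {e : E // e ∉ T0}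
    swap
    · rw [minorProd, dif_neg hcard, if_neg (fun h => hcard (hcard_of S h))]
    -- the transposed minor
    have htr : Zmᵀ.submatrix id (fun i => ((enumS {e : E // e ∉ T0} S hcard i : E)))
        = (Zm.submatrix (fun i => ((enumS {e : E // e ∉ T0} S hcard i : E))) id)ᵀ := rfl
    have hminor : minorProd Zmᵀ Zm S
        = (Zm.submatrix (fun i => ((enumS {e : E // e ∉ T0} S hcard i : E))) id).det
          * (Zm.submatrix (fun i => ((enumS {e : E // e ∉ T0} S hcard i : E))) id).det := by
      rw [minorProd, dif_pos hcard, htr, Matrix.det_transpose]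
    have hcompl_card : Sᶜ.card + 1 = Fintype.card V := by
      have h2 : Sᶜ.card = Fintype.card E - S.card := Finset.card_compl S
      have h3 := hSle S
      have h4 := hSle T0
      omega
    set es : {e : E // e ∉ T0} ≃ {x // x ∈ S} := enumS {e : E // e ∉ T0} S hcard with hes
    by_cases hST : IsSpanningTree src tgt Sᶜ
    · -- `Sᶜ` is a spanning tree: the minor is `±1`
      rw [if_pos hST]
      obtain ⟨hT1conn, hT1card⟩ := hST
      obtain ⟨D', hD'supp, hD'cyc⟩ := exists_pathdata src tgt hT1conn
      set Zm' : Matrix E {e : E // e ∉ Sᶜ} ℤ := Matrix.of fun e k => Zchain Sᶜ D' k e with hZm'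
      set A : Matrix {e : E // e ∉ Sᶜ} {e : E // e ∉ T0} ℤ := Matrix.of fun k j => Zm (k : E) j with hA
      set B : Matrix {e : E // e ∉ T0} {e : E // e ∉ Sᶜ} ℤ := Matrix.of fun j k => Zm' (j : E) k with hB
      -- every fundamental cycle of `T0` is an integral combination of those of `Sᶜ`
      have hZA : ∀ (e : E) (j : {e : E // e ∉ T0}), Zchain T0 D j e = ∑ k : {e : E // e ∉ Sᶜ}, Zchain Sᶜ D' k e * A k j := by
        intro e j
        set c : E → ℤ := fun x => Zchain T0 D j x - ∑ k : {e : E // e ∉ Sᶜ}, Zchain Sᶜ D' k x * A k j with hc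
        have hcsum : c = Zchain T0 D j - ∑ k : {e : E // e ∉ Sᶜ}, A k j • Zchain Sᶜ D' k := by
          funext x
          simp only [hc, Pi.sub_apply, Finset.sum_apply, Pi.smul_apply, smul_eq_mul]
          rw [sub_right_inj]
          exact Finset.sum_congr rfl fun k _ => mul_comm _ _
        have hbdry : bdry src tgt c = 0 := by
          rw [hcsum, bdry_eq_hom, map_sub, map_sum]
          have h1 : bdryHom src tgt (Zchain T0 D j) = 0 := hDcyc j
          have h2 : ∀ k : {e : E // e ∉ Sᶜ}, bdryHom src tgt (A k j • Zchain Sᶜ D' k) = 0 := by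
            intro k
            rw [map_zsmul]
            have h3 : bdryHom src tgt (Zchain Sᶜ D' k) = 0 := hD'cyc k
            rw [h3, smul_zero]
          rw [h1, Finset.sum_congr rfl fun k _ => h2 k]
          simp
        have hsupp : ∀ x, c x ≠ 0 → x ∈ Sᶜ := by
          intro x hx
          by_contra hxT1
          apply hx
          have hDx : ∀ k : {e : E // e ∉ Sᶜ}, D' k x = 0 := by
            intro k
            by_contra h
            exact hxT1 (hD'supp k x h)
          have hsum : ∑ k : {e : E // e ∉ Sᶜ}, Zchain Sᶜ D' k x * A k j = A ⟨x, hxT1⟩ j := by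
            rw [Finset.sum_eq_single (⟨x, hxT1⟩ : {e : E // e ∉ Sᶜ})]
            · simp [Zchain, hDx]
            · intro k _ hk
              have hxk : x ≠ (k : E) := by
                intro h
                exact hk (by ext; exact h.symm)
              simp [Zchain, hDx, hxk]
            · intro h; exact absurd (Finset.mem_univ _) h
          simp only [hc, hsum]
          simp only [hA, Matrix.of_apply, hZm]
          exact sub_self _
        have hzero := cycle_in_tree_zero src tgt hT1conn hT1card hsupp hbdry
        have hz2 := congrFun hzero e
        simp only [hc, Pi.zero_apply] at hz2
        linarith
      -- and conversely
      have hZB : ∀ (e : E) (k : {e : E // e ∉ Sᶜ}), Zchain Sᶜ D' k e = ∑ j : {e : E // e ∉ T0}, Zchain T0 D j e * B j k := by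
        intro e k0
        set c : E → ℤ := fun x => Zchain Sᶜ D' k0 x - ∑ j : {e : E // e ∉ T0}, Zchain T0 D j x * B j k0 with hc
        have hcsum : c = Zchain Sᶜ D' k0 - ∑ j : {e : E // e ∉ T0}, B j k0 • Zchain T0 D j := by
          funext x
          simp only [hc, Pi.sub_apply, Finset.sum_apply, Pi.smul_apply, smul_eq_mul]
          rw [sub_right_inj]
          exact Finset.sum_congr rfl fun k _ => mul_comm _ _
        have hbdry : bdry src tgt c = 0 := by
          rw [hcsum, bdry_eq_hom, map_sub, map_sum]
          have h1 : bdryHom src tgt (Zchain Sᶜ D' k0) = 0 := hD'cyc k0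
          have h2 : ∀ j : {e : E // e ∉ T0}, bdryHom src tgt (B j k0 • Zchain T0 D j) = 0 := by
            intro j
            rw [map_zsmul]
            have h3 : bdryHom src tgt (Zchain T0 D j) = 0 := hDcyc j
            rw [h3, smul_zero]
          rw [h1, Finset.sum_congr rfl fun j _ => h2 j]
          simp
        have hsupp : ∀ x, c x ≠ 0 → x ∈ T0 := by
          intro x hx
          by_contra hxT0
          apply hx
          have hDx : ∀ j : {e : E // e ∉ T0}, D j x = 0 := by
            intro j
            by_contra h
            exact hxT0 (hDsupp j x h)
          have hsum : ∑ j : {e : E // e ∉ T0}, Zchain T0 D j x * B j k0 = B ⟨x, hxT0⟩ k0 := by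
            rw [Finset.sum_eq_single (⟨x, hxT0⟩ : {e : E // e ∉ T0})]
            · simp [Zchain, hDx]
            · intro j _ hj
              have hxj : x ≠ (j : E) := by
                intro h
                exact hj (by ext; exact h.symm)
              simp [Zchain, hDx, hxj]
            · intro h; exact absurd (Finset.mem_univ _) h
          simp only [hc, hsum]
          simp only [hB, Matrix.of_apply, hZm']
          exact sub_self _
        have hzero := cycle_in_tree_zero src tgt hT0conn hT0card hsupp hbdry
        have hz2 := congrFun hzero e
        simp only [hc, Pi.zero_apply] at hz2
        linarith
      -- `B * A = 1`
      have hBA : B * A = 1 := by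
        ext j' j
        rw [Matrix.mul_apply]
        have h1 : ∑ k : {e : E // e ∉ Sᶜ}, B j' k * A k j = ∑ k : {e : E // e ∉ Sᶜ}, Zchain Sᶜ D' k (j' : E) * A k j :=
          Finset.sum_congr rfl fun k _ => by rw [hB]; rfl
        rw [h1, ← hZA (j' : E) j]
        have hDj : D j (j' : E) = 0 := by
          by_contra h
          exact j'.2 (hDsupp j _ h)
        simp only [Zchain, hDj, add_zero, Matrix.one_apply]
        by_cases h : j' = j
        · subst h; simp
        · rw [if_neg (fun h2 => h (Subtype.ext h2)), if_neg h]
      -- `A * B = 1`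
      have hAB : A * B = 1 := by
        ext k' k
        rw [Matrix.mul_apply]
        have h1 : ∑ j : {e : E // e ∉ T0}, A k' j * B j k = ∑ j : {e : E // e ∉ T0}, Zchain T0 D j (k' : E) * B j k :=
          Finset.sum_congr rfl fun j _ => by rw [hA]; rfl
        rw [h1, ← hZB (k' : E) k]
        have hDk : D' k (k' : E) = 0 := by
          by_contra h
          exact k'.2 (hD'supp k _ h)
        simp only [Zchain, hDk, add_zero, Matrix.one_apply]
        by_cases h : k' = k
        · subst h; simp
        · rw [if_neg (fun h2 => h (Subtype.ext h2)), if_neg h]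
      -- transport to square matrices over `{e : E // e ∉ T0}`
      set φ : {e : E // e ∉ T0} ≃ {e : E // e ∉ Sᶜ} := es.trans (Equiv.subtypeEquivRight (fun x => by
        simp [Finset.mem_compl])) with hφ
      have hφval : ∀ i : {e : E // e ∉ T0}, ((φ i : E)) = ((es i : E)) := fun i => rfl
      set A' : Matrix {e : E // e ∉ T0} {e : E // e ∉ T0} ℤ := A.submatrix φ id with hA'
      set B' : Matrix {e : E // e ∉ T0} {e : E // e ∉ T0} ℤ := B.submatrix id φ with hB'
      have hA'B' : A' * B' = 1 := by
        ext i j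
        rw [hA', hB', Matrix.mul_apply]
        have hrw : ∑ k : {e : E // e ∉ T0}, A.submatrix (⇑φ) id i k * B.submatrix id (⇑φ) k j
            = ∑ k : {e : E // e ∉ T0}, A (φ i) k * B k (φ j) := rfl
        rw [hrw]
        have h2 : (A * B) (φ i) (φ j) = (1 : Matrix {e : E // e ∉ Sᶜ} {e : E // e ∉ Sᶜ} ℤ) (φ i) (φ j) := by rw [hAB]
        rw [Matrix.mul_apply] at h2
        rw [h2, Matrix.one_apply, Matrix.one_apply]
        by_cases h : i = j
        · subst h; simp
        · rw [if_neg (fun h2 => h (φ.injective h2)), if_neg h]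
      have hdet1 : A'.det * B'.det = 1 := by
        rw [← Matrix.det_mul, hA'B', Matrix.det_one]
      have hsub : Zm.submatrix (fun i => ((es i : E))) id = A' := by
        ext i j
        rw [hA']
        simp only [Matrix.submatrix_apply, id_eq]
        rw [hA]
        simp only [Matrix.of_apply]
        rw [hφval i]
      rw [hminor, hsub]
      have hunit : IsUnit A'.det := IsUnit.of_mul_eq_one _ hdet1
      rcases Int.isUnit_iff.1 hunit with h | h <;> rw [h] <;> norm_num
    · -- `Sᶜ` is not a spanning tree: the minor vanishes
      rw [if_neg hST]
      have hnconn : ¬ ConnectedVia src tgt Sᶜ := by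
        intro hconn
        exact hST ⟨hconn, hcompl_card⟩
      rw [ConnectedVia] at hnconn
      push_neg at hnconn
      obtain ⟨a, b, hab⟩ := hnconn
      set g : V → ℤ := fun v => if Reach src tgt Sᶜ a v then 1 else 0 with hg
      have hre := reach_equivalence src tgt Sᶜ
      set δ : E → ℤ := fun e => g (tgt e) - g (src e) with hδ
      have hδS : ∀ e, e ∉ S → δ e = 0 := by
        intro e he
        have heS : e ∈ Sᶜ := Finset.mem_compl.2 he
        have hstep : Reach src tgt Sᶜ (src e) (tgt e) :=
          Relation.EqvGen.rel _ _ ⟨e, heS, Or.inl ⟨rfl, rfl⟩⟩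
        simp only [hδ, hg]
        by_cases h1 : Reach src tgt Sᶜ a (src e)
        · rw [if_pos (hre.trans h1 hstep), if_pos h1, sub_self]
        · rw [if_neg (fun h2 => h1 (hre.trans h2 (hre.symm hstep))), if_neg h1, sub_self]
      have hδne : ∃ e, δ e ≠ 0 := by
        by_contra h
        push_neg at h
        have hgconst : ∀ x y : V, Reach src tgt Finset.univ x y → g x = g y := by
          intro x y hxy
          refine eqvGen_le (s := fun x y : V => g x = g y)
            ⟨fun _ => rfl, fun h => h.symm, fun h1 h2 => h1.trans h2⟩ ?_ hxy
          rintro u w ⟨e, -, hd⟩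
          have hz := h e
          simp only [hδ, sub_eq_zero] at hz
          rcases hd with ⟨h1, h2⟩ | ⟨h1, h2⟩
          · rw [← h1, ← h2]; exact hz.symm
          · rw [← h1, ← h2]; exact hz
        have h1 := hgconst a b (hG a b)
        simp only [hg, if_pos (hre.refl a), if_neg hab] at h1
        exact absurd h1 one_ne_zero
      -- the rows of the minor are dependent
      set M : Matrix {e : E // e ∉ T0} {e : E // e ∉ T0} ℤ := Zm.submatrix (fun i => ((es i : E))) id with hM
      set v : {e : E // e ∉ T0} → ℤ := fun k => δ ((es k : E)) with hv
      have hvne : v ≠ 0 := by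
        obtain ⟨e, he⟩ := hδne
        have heS : e ∈ S := by
          by_contra h
          exact he (hδS e h)
        intro h
        have hz := congrFun h (es.symm ⟨e, heS⟩)
        simp only [hv, Pi.zero_apply] at hz
        rw [Equiv.apply_symm_apply] at hz
        exact he hz
      have hvM : Matrix.vecMul v M = 0 := by
        funext j
        have h1 : Matrix.vecMul v M j = ∑ k : {e : E // e ∉ T0}, δ ((es k : E)) * Zchain T0 D j ((es k : E)) :=
          rfl
        rw [h1, Pi.zero_apply]
        have h2 : ∑ k : {e : E // e ∉ T0}, δ ((es k : E)) * Zchain T0 D j ((es k : E))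
            = ∑ x : {x // x ∈ S}, δ (x : E) * Zchain T0 D j (x : E) :=
          Equiv.sum_comp es (fun x : {x // x ∈ S} => δ (x : E) * Zchain T0 D j (x : E))
        have h3 : ∑ x : {x // x ∈ S}, δ (x : E) * Zchain T0 D j (x : E)
            = ∑ e ∈ S, δ e * Zchain T0 D j e :=
          Finset.sum_coe_sort S (fun e => δ e * Zchain T0 D j e)
        have h4 : ∑ e ∈ S, δ e * Zchain T0 D j e = ∑ e : E, δ e * Zchain T0 D j e := by
          refine Finset.sum_subset (Finset.subset_univ S) ?_
          intro e _ he
          rw [hδS e he, zero_mul]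
        have h5 : ∑ e : E, δ e * Zchain T0 D j e
            = ∑ w : V, g w * bdry src tgt (Zchain T0 D j) w := by
          rw [← sum_comm_bdry]
        rw [h2, h3, h4, h5, hDcyc j]
        simp
      have hdet0 : M.det = 0 := by
        by_contra h
        exact hvne (Matrix.eq_zero_of_vecMul_eq_zero h hvM)
      rw [hminor, hdet0, mul_zero]
  -- put everything together
  rw [hMesh, cauchy_binet]
  have hsum : ∑ S : Finset E, minorProd Zmᵀ Zm S
      = ∑ S : Finset E, (if IsSpanningTree src tgt Sᶜ then (1 : ℤ) else 0) :=
    Finset.sum_congr rfl fun S _ => hterm S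
  rw [hsum, Finset.sum_boole]
  have hbij : (Finset.univ.filter fun S : Finset E => IsSpanningTree src tgt Sᶜ).card
      = (Finset.univ.filter fun T : Finset E => IsSpanningTree src tgt T).card := by
    refine Finset.card_bij (fun S _ => Sᶜ) ?_ ?_ ?_
    · intro S hS
      rw [Finset.mem_filter] at hS ⊢
      exact ⟨Finset.mem_univ _, hS.2⟩
    · intro S1 hS1 S2 hS2 h
      exact compl_injective h
    · intro T hT
      rw [Finset.mem_filter] at hT
      exact ⟨Tᶜ, Finset.mem_filter.2 ⟨Finset.mem_univ _, by rw [compl_compl]; exact hT.2⟩,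
        compl_compl T⟩
  rw [hbij]
  have hST2 : ST src tgt
      = (Finset.univ.filter fun T : Finset E => IsSpanningTree src tgt T).card := by
    rw [ST, Nat.card_eq_fintype_card, Fintype.card_subtype]
  rw [hST2]

end Mesh
end

section
/- Let G be a finite connected multigraph with spanning tree T0. Then Mesh(G,T0) − Id_N = YᵀY is a positive semidefinite symmetric integer matrix; consequently every eigenvalue of the mesh matrix Mesh(G,T0) is real and ≥ +1. -/
open scoped Classical
open Polynomial BigOperators Matrix

namespace Mesh

variable {V E : Type}

open scoped ComplexOrder

/-- `Mesh(G,T0) - Id = YᵀY` is a positive semidefinite symmetric integer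
matrix; consequently every eigenvalue of `Mesh(G,T0)` is real and `≥ 1`. -/
theorem stmt2 {V E : Type} [Fintype V] [Fintype E] [DecidableEq V] [DecidableEq E]
    (src tgt : E → V) (hG : ConnectedVia src tgt Finset.univ)
    (T0 : Finset E) (hT0 : IsSpanningTree src tgt T0)
    (D : {e : E // e ∉ T0} → E → ℤ) (hD : IsPathData src tgt T0 D) :
    MeshM T0 D - 1 = (Ymat T0 D)ᵀ * Ymat T0 D
    ∧ (MeshM T0 D - 1).IsSymm
    ∧ ((MeshM T0 D - 1).map (Int.cast : ℤ → ℝ)).PosSemidef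
    ∧ ∀ μ : ℂ, μ ∈ spectrum ℂ ((MeshM T0 D).map (Int.cast : ℤ → ℂ)) →
        ∃ r : ℝ, μ = (r : ℂ) ∧ 1 ≤ r := by
  classical
  -- `D j` vanishes on non-tree edges coerced from the index type
  have hDzero : ∀ (j j' : {e : E // e ∉ T0}), D j (j' : E) = 0 := by
    intro j j'
    by_contra h
    exact j'.2 (hD.1 j _ h)
  have h1 : MeshM T0 D - 1 = (Ymat T0 D)ᵀ * Ymat T0 D := by
    ext j1 j2
    have hd1 : D j2 (j1 : E) = 0 := hDzero j2 j1
    have hd2 : D j1 (j2 : E) = 0 := hDzero j1 j2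
    have hsum : ∑ e : E, D j1 e * D j2 e
        = ∑ k : {f : E // f ∈ T0}, D j1 (k : E) * D j2 (k : E) := by
      rw [← Finset.sum_subtype T0 (fun x => Iff.rfl) (fun e => D j1 e * D j2 e)]
      refine (Finset.sum_subset (Finset.subset_univ T0) ?_).symm
      intro e _ he
      have : D j1 e = 0 := by
        by_contra h
        exact he (hD.1 j1 e h)
      simp [this]
    simp only [Matrix.sub_apply, Matrix.one_apply, MeshM, Ymat, Matrix.mul_apply,
      Matrix.transpose_apply, Matrix.of_apply, Zchain, add_mul, mul_add,
      Finset.sum_add_distrib, ite_mul, mul_ite, one_mul, zero_mul, mul_zero, mul_one,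
      Finset.sum_ite_eq', Finset.mem_univ, if_true, hd1, hd2, hsum]
    by_cases h : j1 = j2
    · simp [h]
    · have h' : (j1 : E) ≠ (j2 : E) := fun hc => h (Subtype.ext hc)
      simp [h, h', Ne.symm h']
  refine ⟨h1, ?_, ?_, ?_⟩
  · rw [h1]
    rw [Matrix.IsSymm, Matrix.transpose_mul, Matrix.transpose_transpose]
  · have : (MeshM T0 D - 1).map (Int.cast : ℤ → ℝ)
        = ((Ymat T0 D).map (Int.cast : ℤ → ℝ))ᴴ * ((Ymat T0 D).map (Int.cast : ℤ → ℝ)) := by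
      rw [h1, Matrix.conjTranspose_eq_transpose_of_trivial, ← Matrix.transpose_map]
      ext i j
      simp [Matrix.map_apply, Matrix.mul_apply, Matrix.transpose_apply]
    rw [this]
    exact Matrix.posSemidef_conjTranspose_mul_self _
  · intro μ hμ
    set C : Matrix {f : E // f ∈ T0} {e : E // e ∉ T0} ℂ :=
      (Ymat T0 D).map (Int.cast : ℤ → ℂ) with hCdef
    have hM1 : MeshM T0 D = 1 + (Ymat T0 D)ᵀ * Ymat T0 D := by
      rw [← h1]; abel
    have hCH : Cᴴ = Cᵀ := by
      ext k j
      simp only [hCdef, Matrix.conjTranspose_apply, Matrix.transpose_apply, Matrix.map_apply]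
      exact map_intCast (starRingEnd ℂ) _
    have hMc : (MeshM T0 D).map (Int.cast : ℤ → ℂ) = 1 + Cᴴ * C := by
      rw [hM1, hCH, hCdef]
      ext i j
      simp only [Matrix.map_apply, Matrix.add_apply, Matrix.mul_apply, Matrix.one_apply,
        Matrix.transpose_apply]
      push_cast [apply_ite (Int.cast : ℤ → ℂ)]
      ring
    -- pass to the endomorphism and get an eigenvector
    set Mc := (MeshM T0 D).map (Int.cast : ℤ → ℂ) with hMcdef
    have hspec : μ ∈ spectrum ℂ (Matrix.toLinAlgEquiv' Mc) := by
      rwa [AlgEquiv.spectrum_eq]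
    have hev : Module.End.HasEigenvalue (Matrix.toLinAlgEquiv' Mc) μ :=
      Module.End.hasEigenvalue_iff_mem_spectrum.mpr hspec
    obtain ⟨v, hv⟩ := hev.exists_hasEigenvector
    have hvne : v ≠ 0 := hv.right
    have hmul : Mc *ᵥ v = μ • v := by
      have := hv.apply_eq_smul
      rwa [Matrix.toLinAlgEquiv'_apply] at this
    set s : ℂ := dotProduct (star v) v with hsdef
    set q : ℂ := dotProduct (star v) ((Cᴴ * C) *ᵥ v) with hqdef
    have hs_nonneg : 0 ≤ s := dotProduct_star_self_nonneg v
    have hs_ne : s ≠ 0 := fun h => hvne (dotProduct_star_self_eq_zero.mp h)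
    have hq_nonneg : 0 ≤ q := (Matrix.posSemidef_conjTranspose_mul_self C).dotProduct_mulVec_nonneg v
    have hkey : μ * s = s + q := by
      have h1' : dotProduct (star v) (Mc *ᵥ v) = μ * s := by
        rw [hmul, dotProduct_smul, smul_eq_mul, hsdef]
      have h2' : dotProduct (star v) (Mc *ᵥ v) = s + q := by
        rw [hMc, Matrix.add_mulVec, Matrix.one_mulVec, dotProduct_add, hsdef, hqdef]
      rw [← h1', h2']
    obtain ⟨hsre, hsim⟩ := Complex.nonneg_iff.mp hs_nonneg
    obtain ⟨hqre, hqim⟩ := Complex.nonneg_iff.mp hq_nonneg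
    have hs_eq : s = (s.re : ℂ) := by
      rw [Complex.ext_iff]; simp [← hsim]
    have hq_eq : q = (q.re : ℂ) := by
      rw [Complex.ext_iff]; simp [← hqim]
    have hsre_pos : 0 < s.re := by
      rcases lt_or_eq_of_le hsre with h | h
      · exact h
      · exfalso; apply hs_ne; rw [hs_eq, ← h]; simp
    refine ⟨(s.re + q.re) / s.re, ?_, ?_⟩
    · have : μ = (s + q) / s := by
        field_simp at hkey ⊢
        linear_combination hkey
      rw [this, hs_eq, hq_eq, Complex.ofReal_div, Complex.ofReal_add]
      simp
    · rw [le_div_iff₀ hsre_pos]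
      linarith


end Mesh
end

section
/- Let G be a finite connected multigraph with spanning tree T0, and let Y[k,j] = ⟨f_k, Z[j]⟩ be the coefficient of f_k in D(e_j). Then the 1-chains b[f_k] = f_k − Σ_{j=1}^{N} Y[k,j]·e_j, for k = 1,…,M, form an integral basis of the subgroup Π(B^1(G;ℤ)) of C_1(G;ℤ). -/
open scoped Classical
open Polynomial BigOperators Matrix

namespace Mesh

variable {V E : Type}

/-- The 1-chain `b[f_k] = f_k - Σ_j Y[k,j] e_j`. -/
noncomputable def Bchain {E : Type} [DecidableEq E] (T0 : Finset E)
    (D : {e : E // e ∉ T0} → E → ℤ) (k : {f : E // f ∈ T0}) : E → ℤ :=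
  fun e => (if e = (k : E) then 1 else 0) - (if h : e ∈ T0 then 0 else D ⟨e, h⟩ (k : E))

section Stmt4Aux

variable {V E : Type} [Fintype V] [Fintype E] [DecidableEq V] [DecidableEq E]

lemma reach_ind {src tgt : E → V} {S : Finset E} {P : V → V → Prop}
    (hrefl : ∀ a, P a a) (hsymm : ∀ a b, P a b → P b a)
    (htrans : ∀ a b c, P a b → P b c → P a c)
    (hstep : ∀ a b, Step src tgt S a b → P a b) {a b : V}
    (h : Reach src tgt S a b) : P a b := by
  induction h with
  | rel x y h => exact hstep x y h
  | refl x => exact hrefl x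
  | symm x y _ ih => exact hsymm x y ih
  | trans x y z _ _ ih1 ih2 => exact htrans x y z ih1 ih2

/-- A coboundary pairs to zero with every cycle. -/
lemma orth (src tgt : E → V) (g : V → ℤ) (z : E → ℤ) (hz : bdry src tgt z = 0) :
    ∑ e, (g (tgt e) - g (src e)) * z e = 0 := by
  have key : ∀ e : E, (g (tgt e) - g (src e)) * z e
      = ∑ v, g v * ((if tgt e = v then (1:ℤ) else 0) - (if src e = v then 1 else 0)) * z e := by
    intro e
    rw [← Finset.sum_mul]
    congr 1
    have h1 : ∀ v, g v * ((if tgt e = v then (1:ℤ) else 0) - (if src e = v then 1 else 0))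
        = (if tgt e = v then g v else 0) - (if src e = v then g v else 0) := by
      intro v; by_cases h1 : tgt e = v <;> by_cases h2 : src e = v <;> simp [h1, h2]
    rw [Finset.sum_congr rfl fun v _ => h1 v, Finset.sum_sub_distrib]
    simp [Finset.sum_ite_eq]
  calc ∑ e, (g (tgt e) - g (src e)) * z e
      = ∑ e, ∑ v, g v * ((if tgt e = v then (1:ℤ) else 0) - (if src e = v then 1 else 0)) * z e :=
        Finset.sum_congr rfl fun e _ => key e
    _ = ∑ v, g v * bdry src tgt z v := by
        rw [Finset.sum_comm]
        refine Finset.sum_congr rfl fun v _ => ?_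
        simp only [bdry, Finset.mul_sum]
        exact Finset.sum_congr rfl fun e _ => by ring
    _ = 0 := by rw [hz]; simp

/-- The rational "restricted coboundary" map to the tree edges. -/
noncomputable def treeMap (src tgt : E → V) (T0 : Finset E) :
    (V → ℚ) →ₗ[ℚ] ({f : E // f ∈ T0} → ℚ) where
  toFun g k := g (tgt ↑k) - g (src ↑k)
  map_add' a b := by funext k; simp [Pi.add_apply]; ring
  map_smul' m a := by funext k; simp [Pi.smul_apply, smul_eq_mul]; ring

/-- Surjectivity of the restricted coboundary over `ℤ`, for a spanning tree. -/
lemma surj (src tgt : E → V) (T0 : Finset E) (hconn : ConnectedVia src tgt T0)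
    (hcard : T0.card + 1 = Fintype.card V) (t : {f : E // f ∈ T0} → ℤ) :
    ∃ g : V → ℤ, ∀ (f : E) (hf : f ∈ T0), g (tgt f) - g (src f) = t ⟨f, hf⟩ := by
  have hV : 0 < Fintype.card V := by omega
  have hne : Nonempty V := Fintype.card_pos_iff.mp hV
  obtain ⟨v0⟩ := hne
  set L := treeMap src tgt T0 with hL
  have hker : LinearMap.ker L = Submodule.span ℚ {(fun _ => (1:ℚ) : V → ℚ)} := by
    apply le_antisymm
    · intro g hg
      have hg' : ∀ k : {f : E // f ∈ T0}, g (tgt ↑k) - g (src ↑k) = 0 :=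
        fun k => congrFun (LinearMap.mem_ker.mp hg) k
      have hconst : ∀ v, g v = g v0 := by
        intro v
        refine reach_ind (P := fun a b => g a = g b) (fun a => rfl) (fun a b h => h.symm)
          (fun a b c h1 h2 => h1.trans h2) ?_ (hconn v v0)
        intro a b hab
        obtain ⟨f, hf, hcase⟩ := hab
        have h0 := hg' ⟨f, hf⟩
        rcases hcase with ⟨h1, h2⟩ | ⟨h1, h2⟩ <;> rw [h1, h2] at h0 <;> linarith
      rw [Submodule.mem_span_singleton]
      exact ⟨g v0, by funext v; simp [hconst v]⟩
    · rw [Submodule.span_le]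
      intro x hx
      simp only [Set.mem_singleton_iff] at hx
      subst hx
      simp only [SetLike.mem_coe, LinearMap.mem_ker]
      funext k
      simp [hL, treeMap]
  have hrange : LinearMap.range L = ⊤ := by
    apply Submodule.eq_top_of_finrank_eq
    have h1 := LinearMap.finrank_range_add_finrank_ker L
    have hone : (fun _ => (1:ℚ) : V → ℚ) ≠ 0 := by
      intro h; have := congrFun h v0; simp at this
    rw [hker, finrank_span_singleton hone] at h1
    have h2 : Module.finrank ℚ (V → ℚ) = Fintype.card V := Module.finrank_pi ℚ
    have h3 : Module.finrank ℚ ({f : E // f ∈ T0} → ℚ) = T0.card := by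
      rw [Module.finrank_pi ℚ, Fintype.card_coe]
    omega
  obtain ⟨g, hg⟩ := LinearMap.range_eq_top.mp hrange (fun k => (t k : ℚ))
  have hg' : ∀ k : {f : E // f ∈ T0}, g (tgt ↑k) - g (src ↑k) = (t k : ℚ) :=
    fun k => congrFun hg k
  have hint : ∀ v, ∃ m : ℤ, (m : ℚ) = g v - g v0 := by
    intro v
    refine reach_ind (P := fun a b => ∃ m : ℤ, (m:ℚ) = g b - g a)
      (fun a => ⟨0, by simp⟩)
      (fun a b ⟨m, hm⟩ => ⟨-m, by push_cast; rw [hm]; ring⟩)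
      (fun a b c ⟨m1, hm1⟩ ⟨m2, hm2⟩ => ⟨m1 + m2, by push_cast; rw [hm1, hm2]; ring⟩)
      ?_ (hconn v0 v)
    intro a b hab
    obtain ⟨f, hf, hcase⟩ := hab
    have h0 := hg' ⟨f, hf⟩
    rcases hcase with ⟨h1, h2⟩ | ⟨h1, h2⟩ <;> rw [h1, h2] at h0
    · exact ⟨t ⟨f, hf⟩, by rw [h0]⟩
    · exact ⟨-t ⟨f, hf⟩, by push_cast; rw [← h0]; ring⟩
  choose m hm using hint
  refine ⟨m, ?_⟩
  intro f hf
  have h0 := hg' ⟨f, hf⟩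
  have : ((m (tgt f) - m (src f) : ℤ) : ℚ) = ((t ⟨f, hf⟩ : ℤ) : ℚ) := by
    push_cast
    rw [hm (tgt f), hm (src f)]
    simp only at h0
    linarith
  exact_mod_cast this

end Stmt4Aux

/-- The chains `b[f_k] = f_k - Σ_j Y[k,j]·e_j`, for `f_k ∈ T0`, form an
integral basis of the subgroup `Π(B¹(G;ℤ)) = {g∘tgt - g∘src | g : V → ℤ}` of `C_1(G;ℤ)`:
each `b[f_k]` lies in the subgroup, and every element of the subgroup is uniquely an
integral combination of them. -/
theorem stmt4 {V E : Type} [Fintype V] [Fintype E] [DecidableEq V] [DecidableEq E]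
    (src tgt : E → V) (hG : ConnectedVia src tgt Finset.univ)
    (T0 : Finset E) (hT0 : IsSpanningTree src tgt T0)
    (D : {e : E // e ∉ T0} → E → ℤ) (hD : IsPathData src tgt T0 D)
    (hY : ∀ (k : {f : E // f ∈ T0}) (j : {e : E // e ∉ T0}),
        D j (k : E) = ∑ e, (if e = (k : E) then (1 : ℤ) else 0) * Zchain T0 D j e) :
    (∀ k : {f : E // f ∈ T0},
        ∃ g : V → ℤ, Bchain T0 D k = fun e => g (tgt e) - g (src e))
    ∧ ∀ c : E → ℤ, (∃ g : V → ℤ, c = fun e => g (tgt e) - g (src e)) →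
        ∃! y : {f : E // f ∈ T0} → ℤ, c = fun e => ∑ k, y k * Bchain T0 D k e := by
  obtain ⟨hDsupp, hDcyc⟩ := hD
  have hZcoef : ∀ (g : V → ℤ) (j : {e : E // e ∉ T0}),
      g (tgt ↑j) - g (src ↑j) = -∑ f, (g (tgt f) - g (src f)) * D j f := by
    intro g j
    have horth := orth src tgt g (Zchain T0 D j) (hDcyc j)
    have hsplit : ∀ f : E, (g (tgt f) - g (src f)) * Zchain T0 D j f
        = (if f = (j : E) then g (tgt f) - g (src f) else 0)
          + (g (tgt f) - g (src f)) * D j f := by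
      intro f
      simp only [Zchain]
      by_cases hf : f = (j : E) <;> simp [hf] <;> ring
    rw [Finset.sum_congr rfl fun f _ => hsplit f, Finset.sum_add_distrib,
      Finset.sum_ite_eq' Finset.univ (j : E)] at horth
    simp only [Finset.mem_univ, if_true] at horth
    linarith
  have hsumT0 : ∀ (g : V → ℤ) (j : {e : E // e ∉ T0}),
      ∑ f, (g (tgt f) - g (src f)) * D j f
        = ∑ k : {f : E // f ∈ T0}, (g (tgt ↑k) - g (src ↑k)) * D j ↑k := by
    intro g j
    symm
    rw [Finset.sum_coe_sort T0 (fun f => (g (tgt f) - g (src f)) * D j f)]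
    apply Finset.sum_subset (Finset.subset_univ T0)
    intro f _ hf
    have : D j f = 0 := by
      by_contra h; exact hf (hDsupp j f h)
    simp [this]
  constructor
  · intro k
    obtain ⟨g, hg⟩ := surj src tgt T0 hT0.1 hT0.2
      (fun k' => if k' = k then 1 else 0)
    refine ⟨g, ?_⟩
    funext e
    by_cases he : e ∈ T0
    · have h1 := hg e he
      simp only [Bchain, dif_pos he, sub_zero]
      rw [h1]
      by_cases hk : (⟨e, he⟩ : {f : E // f ∈ T0}) = k
      · have : e = (k : E) := by rw [← hk]
        simp [hk, this]
      · have : e ≠ (k : E) := fun h => hk (Subtype.ext h)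
        simp [hk, this]
    · have j : {e : E // e ∉ T0} := ⟨e, he⟩
      have hZ := hZcoef g ⟨e, he⟩
      rw [hsumT0 g ⟨e, he⟩] at hZ
      have hterm : ∀ k' : {f : E // f ∈ T0},
          (g (tgt ↑k') - g (src ↑k')) * D ⟨e, he⟩ ↑k'
            = if k' = k then D ⟨e, he⟩ ↑k' else 0 := by
        intro k'
        rw [hg ↑k' k'.2]
        by_cases hk : k' = k <;> simp [hk]
      rw [Finset.sum_congr rfl fun k' _ => hterm k',
        Finset.sum_ite_eq' Finset.univ k] at hZ
      simp only [Finset.mem_univ, if_true] at hZ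
      have hek : e ≠ (k : E) := fun h => he (h ▸ k.2)
      simp only [Bchain, dif_neg he, if_neg hek]
      have hZ' : g (tgt e) - g (src e) = -(D ⟨e, he⟩ ↑k) := hZ
      omega
  · rintro c ⟨g, rfl⟩
    refine ⟨fun k => g (tgt ↑k) - g (src ↑k), ?_, ?_⟩
    · funext e
      by_cases he : e ∈ T0
      · have hterm : ∀ k : {f : E // f ∈ T0},
            (g (tgt ↑k) - g (src ↑k)) * Bchain T0 D k e
              = if k = ⟨e, he⟩ then g (tgt e) - g (src e) else 0 := by
          intro k
          simp only [Bchain, dif_pos he, sub_zero]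
          by_cases hk : k = (⟨e, he⟩ : {f : E // f ∈ T0})
          · have : e = (k : E) := by rw [hk]
            simp [hk, ← this]
          · have : e ≠ (k : E) := fun h => hk (by apply Subtype.ext; rw [← h])
            simp [hk, this]
        rw [Finset.sum_congr rfl fun k _ => hterm k,
          Finset.sum_ite_eq' Finset.univ (⟨e, he⟩ : {f : E // f ∈ T0})]
        simp
      · have hZ := hZcoef g ⟨e, he⟩
        rw [hsumT0 g ⟨e, he⟩] at hZ
        have hterm : ∀ k : {f : E // f ∈ T0},
            (g (tgt ↑k) - g (src ↑k)) * Bchain T0 D k e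
              = -((g (tgt ↑k) - g (src ↑k)) * D ⟨e, he⟩ ↑k) := by
          intro k
          have hek : e ≠ (k : E) := fun h => he (h ▸ k.2)
          simp only [Bchain, dif_neg he, if_neg hek]
          ring
        rw [Finset.sum_congr rfl fun k _ => hterm k, Finset.sum_neg_distrib]
        exact hZ
    · intro y hy
      funext k
      have hk := congrFun hy (k : E)
      have hterm : ∀ k' : {f : E // f ∈ T0},
          y k' * Bchain T0 D k' ↑k = if k' = k then y k' else 0 := by
        intro k'
        simp only [Bchain, dif_pos k.2, sub_zero]
        by_cases h : k' = k
        · have : (k : E) = (k' : E) := by rw [h]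
          simp [h, this]
        · have : (k : E) ≠ (k' : E) := fun hh => h (Subtype.ext hh.symm)
          simp [h, this]
      rw [Finset.sum_congr rfl fun k' _ => hterm k',
        Finset.sum_ite_eq' Finset.univ k] at hk
      simp only [Finset.mem_univ, if_true] at hk
      exact hk.symm

end Mesh
end

section
/- Let H be a finite graph, and apply the mesh construction to the pair (C'(H), C(V(H))), where C'(H) is connected and C(V(H)) is a spanning tree of C'(H) whose edges are the cone edges (P → W) for P ∈ V(H). For each directed edge e_j = (P_j → Q_j) of H (the edges of C'(H) not in the spanning tree), the associated cycle is Z[j] = e_j + (Q_j → W) − (P_j → W), so D(e_j) = (Q_j → W) − (P_j → W); under the identification C_1(C(V(H));ℤ) ≅ C_0(H;ℤ) sending (P → W) to P, the map D becomes the standard boundary map ∂: C_1(H;ℤ) → C_0(H;ℤ), ∂(e_j) = Q_j − P_j. Consequently the mesh Laplacian Δ(C'(H),C(V(H))) = Y·Yᵀ equals the Kirchhoff graph Laplacian Δ(H) = ∂·∂ᵀ = Deg − Adj of H. -/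
open scoped Classical
open Polynomial BigOperators Matrix

namespace Mesh

variable {V E : Type}

section
variable {V E : Type}

lemma reach_none [Fintype E] [Fintype V] (src : E → V) (tgt : E → V)
    (S : Finset (E ⊕ V)) (hS : ∀ p : V, Sum.inr p ∈ S) (a : Option V) :
    Relation.EqvGen (Step (coneSrc src) (coneTgt tgt) S) a none := by
  cases a with
  | none => exact Relation.EqvGen.refl none
  | some p =>
    exact Relation.EqvGen.rel _ _ ⟨Sum.inr p, hS p, Or.inl ⟨rfl, rfl⟩⟩

lemma cone_connected' [Fintype E] [Fintype V] (src : E → V) (tgt : E → V)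
    (S : Finset (E ⊕ V)) (hS : ∀ p : V, Sum.inr p ∈ S) :
    ConnectedVia (coneSrc src) (coneTgt tgt) S := by
  intro a b
  exact Relation.EqvGen.trans _ _ _ (reach_none src tgt S hS a)
    (Relation.EqvGen.symm _ _ (reach_none src tgt S hS b))

lemma coneTree_eq [Fintype E] [Fintype V] :
    coneTree E V = Finset.univ.map ⟨(Sum.inr : V → E ⊕ V), Sum.inr_injective⟩ := by
  ext x
  cases x <;> simp [coneTree]

lemma coneTree_card [Fintype E] [Fintype V] :
    (coneTree E V).card = Fintype.card V := by
  rw [coneTree_eq, Finset.card_map, Finset.card_univ]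

end
/-- For a finite graph `H` (no loops), in the pair `(C'(H), C(V(H)))`:
`C'(H)` is connected and the cone `C(V(H))` is a spanning tree; for each edge
`e = (P → Q)` of `H`, the chain `D(e) = (Q → W) - (P → W)` is supported in the cone and
`Z[e] = e + D(e)` is a 1-cycle; under the identification `(P → W) ↦ P` the map `D`
becomes the boundary map `∂` of `H`; and the mesh Laplacian `Y·Yᵀ` equals the Kirchhoff
Laplacian `Δ(H) = Deg - Adj`. -/
theorem stmt6 {V E : Type} [Fintype V] [Fintype E] [DecidableEq V] [DecidableEq E]
    (src tgt : E → V) (hloopfree : ∀ e : E, src e ≠ tgt e) :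
    ConnectedVia (coneSrc src) (coneTgt tgt) Finset.univ
    ∧ IsSpanningTree (coneSrc src) (coneTgt tgt) (coneTree E V)
    ∧ (∀ (e : E) (x : E ⊕ V), coneD src tgt e x ≠ 0 → x ∈ coneTree E V)
    ∧ (∀ e : E, bdry (coneSrc src) (coneTgt tgt)
        (fun x => (if x = Sum.inl e then 1 else 0) + coneD src tgt e x) = 0)
    ∧ (∀ (e : E) (v : V), coneD src tgt e (Sum.inr v) = inc src tgt e v)
    ∧ (Matrix.of fun v w : V => ∑ e : E, coneD src tgt e (Sum.inr v) * coneD src tgt e (Sum.inr w))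
        = LapDegAdj src tgt := by
  refine ⟨cone_connected' src tgt _ (fun p => Finset.mem_univ _),
    ⟨cone_connected' src tgt _ (by intro p; simp [coneTree]), by
      rw [coneTree_card, Fintype.card_option]⟩,
    ?_, ?_, ?_, ?_⟩
  · intro e x hx
    cases x with
    | inl f => simp [coneD] at hx
    | inr p => simp [coneTree]
  · intro e
    funext v
    cases v with
    | none =>
      simp [bdry, Fintype.sum_sum_type, coneD, coneSrc, coneTgt, sub_mul, mul_sub,
        Finset.sum_sub_distrib, Finset.sum_ite_eq, Finset.sum_ite_eq', eq_comm]
    | some w =>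
      have hs : ∀ g : E → V, (∑ x : E, if w = g x then (if e = x then (1:ℤ) else 0) else 0)
          = if w = g e then 1 else 0 := by
        intro g
        have : ∀ x : E, (if w = g x then (if e = x then (1:ℤ) else 0) else 0)
            = if e = x then (if w = g x then 1 else 0) else 0 := by
          intro x; split_ifs <;> rfl
        simp [this, Finset.sum_ite_eq]
      simp only [bdry, Fintype.sum_sum_type, coneD, coneSrc, coneTgt, sub_mul, mul_sub,
        Finset.sum_sub_distrib, Finset.sum_ite_eq, Finset.sum_ite_eq', eq_comm,
        Sum.inl.injEq, Sum.inr.injEq, reduceCtorEq, Option.some.injEq, Pi.zero_apply]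
      simp [hs, Finset.sum_sub_distrib]
  · intro e v
    simp [coneD, inc, eq_comm]
  · ext v w
    simp only [Matrix.of_apply, LapDegAdj, Finset.card_filter]
    push_cast
    by_cases hvw : v = w
    · subst hvw
      simp only [if_pos rfl, if_true]
      rw [← Finset.sum_add_distrib, ← Finset.sum_sub_distrib]
      refine Finset.sum_congr rfl fun e _ => ?_
      have hl := hloopfree e
      simp only [coneD, Sum.inr.injEq, eq_comm]
      split_ifs <;> simp_all
    · simp only [if_neg hvw, zero_sub]
      rw [← Finset.sum_neg_distrib]
      refine Finset.sum_congr rfl fun e _ => ?_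
      have hl := hloopfree e
      simp only [coneD, Sum.inr.injEq, eq_comm]
      split_ifs <;> simp_all

end Mesh
end

section
/- Let H be a finite graph with n = |V(H)| vertices and m = |E(H)| edges, and let Y be the matrix of the map D for the pair (C'(H), C(V(H))) (an n×m matrix). Then Mesh(C'(H),C(V(H))) = Id_m + YᵀY, Δ(H) = Y·Yᵀ, and U^n · det(U·Id_m − (Mesh(C'(H),C(V(H))) − Id_m)) = U^m · det(U·Id_n − Δ(H)) as polynomials in U; in particular, Δ(H) has the same non-vanishing eigenvalues, counted with multiplicities, as Mesh(C'(H),C(V(H))) − Id_m. -/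
open scoped Classical
open Polynomial BigOperators Matrix

namespace Mesh

variable {V E : Type}

/-- The mesh matrix of the pair `(C'(H), C(V(H)))`, indexed by the edges of `H`. -/
noncomputable def coneMesh {V E : Type} [Fintype V] [Fintype E] [DecidableEq V] [DecidableEq E]
    (src tgt : E → V) : Matrix E E ℤ :=
  Matrix.of fun e₁ e₂ => ∑ x : E ⊕ V,
    ((if x = Sum.inl e₁ then 1 else 0) + coneD src tgt e₁ x) *
      ((if x = Sum.inl e₂ then 1 else 0) + coneD src tgt e₂ x)

/-- The matrix `Y` of the map `D` for the pair `(C'(H), C(V(H)))`, with the tree edges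
identified with the vertices of `H` and the non-tree edges with the edges of `H`. -/
noncomputable def coneY {V E : Type} [Fintype V] [Fintype E] [DecidableEq V] [DecidableEq E]
    (src tgt : E → V) : Matrix V E ℤ :=
  Matrix.of fun v e => coneD src tgt e (Sum.inr v)


lemma eval_charpoly' {R : Type*} [CommRing R] {n : Type*} [Fintype n] [DecidableEq n]
    (M : Matrix n n R) (r : R) : M.charpoly.eval r = (r • (1 : Matrix n n R) - M).det := by
  have h : (Matrix.charmatrix M).map (Polynomial.evalRingHom r) = r • 1 - M := by
    ext i j
    by_cases hij : i = j <;>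
      simp [Matrix.charmatrix_apply, Matrix.one_apply, Matrix.diagonal_apply, hij]
  calc M.charpoly.eval r = (Polynomial.evalRingHom r) (Matrix.charmatrix M).det := rfl
    _ = ((Matrix.charmatrix M).map (Polynomial.evalRingHom r)).det := RingHom.map_det _ _
    _ = _ := by rw [h]

lemma key_field {F : Type*} [Field F] {ι κ : Type*} [Fintype ι] [Fintype κ]
    [DecidableEq ι] [DecidableEq κ] (A : Matrix ι κ F) (B : Matrix κ ι F) (x : F) (hx : x ≠ 0) :
    x ^ Fintype.card ι * (x • (1 : Matrix κ κ F) - B * A).det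
      = x ^ Fintype.card κ * (x • (1 : Matrix ι ι F) - A * B).det := by
  set B' : Matrix κ ι F := (-x⁻¹) • B with hB'
  have h1 : x • (1 : Matrix κ κ F) - B * A = x • (1 + B' * A) := by
    rw [hB', Matrix.smul_mul, smul_add, smul_smul]; field_simp; rw [sub_eq_add_neg, neg_one_smul]
  have h2 : x • (1 : Matrix ι ι F) - A * B = x • (1 + A * B') := by
    rw [hB', Matrix.mul_smul, smul_add, smul_smul]; field_simp; rw [sub_eq_add_neg, neg_one_smul]
  rw [h1, h2, Matrix.det_smul, Matrix.det_smul, Matrix.det_one_add_mul_comm A B']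
  ring

lemma cast_det {ι : Type*} [Fintype ι] [DecidableEq ι] (M : Matrix ι ι ℤ) (x : ℤ) :
    (((x • (1 : Matrix ι ι ℤ) - M).det : ℤ) : ℚ)
      = ((x : ℚ) • (1 : Matrix ι ι ℚ) - M.map (Int.cast : ℤ → ℚ)).det := by
  rw [show (((x • (1 : Matrix ι ι ℤ) - M).det : ℤ) : ℚ)
      = (Int.castRingHom ℚ) (x • (1 : Matrix ι ι ℤ) - M).det from rfl, RingHom.map_det]
  congr 1
  ext i j
  by_cases h : i = j <;>
    simp [Matrix.map_apply, Matrix.sub_apply, Matrix.smul_apply, Matrix.one_apply, h,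
      ← Matrix.diagonal_intCast, Matrix.diagonal_apply]

lemma key_poly {ι κ : Type*} [Fintype ι] [Fintype κ] [DecidableEq ι] [DecidableEq κ]
    (A : Matrix ι κ ℤ) (B : Matrix κ ι ℤ) :
    (Polynomial.X : ℤ[X]) ^ Fintype.card ι * (B * A).charpoly
      = Polynomial.X ^ Fintype.card κ * (A * B).charpoly := by
  apply mul_right_cancel₀ (Polynomial.X_ne_zero (R := ℤ))
  apply Polynomial.funext
  intro r
  simp only [Polynomial.eval_mul, Polynomial.eval_pow, Polynomial.eval_X]
  rcases eq_or_ne r 0 with h | h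
  · simp [h]
  · rw [eval_charpoly', eval_charpoly']
    apply (Int.cast_injective (α := ℚ))
    simp only [Int.cast_mul, Int.cast_pow, cast_det]
    have h1 : (B * A).map (Int.cast : ℤ → ℚ) = B.map (Int.cast : ℤ → ℚ) * A.map (Int.cast : ℤ → ℚ) := by
      ext i j; simp only [Matrix.map_apply, Matrix.mul_apply, Int.cast_sum, Int.cast_mul]
    have h2 : (A * B).map (Int.cast : ℤ → ℚ) = A.map (Int.cast : ℤ → ℚ) * B.map (Int.cast : ℤ → ℚ) := by
      ext i j; simp only [Matrix.map_apply, Matrix.mul_apply, Int.cast_sum, Int.cast_mul]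
    rw [h1, h2, key_field (A.map _) (B.map _) (r : ℚ) (by exact_mod_cast h)]

lemma mem_spectrum_iff_charpoly {n : Type*} [Fintype n] [DecidableEq n]
    (M : Matrix n n ℂ) (μ : ℂ) :
    μ ∈ spectrum ℂ M ↔ M.charpoly.eval μ = 0 := by
  rw [spectrum.mem_iff, Algebra.algebraMap_eq_smul_one, Matrix.isUnit_iff_isUnit_det,
    isUnit_iff_ne_zero, not_ne_iff, eval_charpoly']


/-- For a finite graph `H` with `n` vertices and `m` edges, with `Y`
the `n × m` matrix of `D` for `(C'(H), C(V(H)))`: `Mesh = Id + YᵀY`, `Δ(H) = Y·Yᵀ`, and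
`U^n · det(U·Id_m - (Mesh - Id_m)) = U^m · det(U·Id_n - Δ(H))`; in particular `Δ(H)` and
`Mesh - Id_m` have the same non-vanishing eigenvalues, with multiplicities. -/
theorem stmt7 {V E : Type} [Fintype V] [Fintype E] [DecidableEq V] [DecidableEq E]
    (src tgt : E → V) (hloopfree : ∀ e : E, src e ≠ tgt e)
    (n m : ℕ) (hn : n = Fintype.card V) (hm : m = Fintype.card E) :
    coneMesh src tgt = 1 + (coneY src tgt)ᵀ * coneY src tgt
    ∧ coneY src tgt * (coneY src tgt)ᵀ = LapDegAdj src tgt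
    ∧ Polynomial.X ^ n * (coneMesh src tgt - 1).charpoly
        = Polynomial.X ^ m * (LapDegAdj src tgt).charpoly
    ∧ ∀ μ : ℂ, μ ≠ 0 →
        (μ ∈ spectrum ℂ ((coneMesh src tgt - 1).map (Int.cast : ℤ → ℂ)) ↔
          μ ∈ spectrum ℂ ((LapDegAdj src tgt).map (Int.cast : ℤ → ℂ))) := by
  have part1 : coneMesh src tgt = 1 + (coneY src tgt)ᵀ * coneY src tgt := by
    ext e₁ e₂
    simp only [coneMesh, Matrix.of_apply, Matrix.add_apply, Matrix.one_apply, Matrix.mul_apply,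
      Matrix.transpose_apply, coneY, Fintype.sum_sum_type, coneD, Sum.inl.injEq, Sum.inr.injEq,
      reduceCtorEq, if_false, sub_zero, add_zero, zero_add, if_true, zero_sub, mul_ite, ite_mul,
      one_mul, mul_one, mul_zero, zero_mul]
    congr 1
    simp [Finset.sum_ite_eq', eq_comm]
  have part2 : coneY src tgt * (coneY src tgt)ᵀ = LapDegAdj src tgt := by
    ext a b
    simp only [Matrix.mul_apply, Matrix.transpose_apply, coneY, Matrix.of_apply, coneD,
      Sum.inr.injEq, LapDegAdj, Finset.card_filter]
    push_cast
    by_cases hab : a = b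
    · subst hab
      rw [if_pos rfl, ← Finset.sum_add_distrib, ← Finset.sum_sub_distrib]
      refine Finset.sum_congr rfl fun e _ => ?_
      have hl := hloopfree e
      by_cases h1 : src e = a <;> by_cases h2 : tgt e = a <;> simp_all [eq_comm]
    · rw [if_neg hab, zero_sub, ← Finset.sum_neg_distrib]
      refine Finset.sum_congr rfl fun e _ => ?_
      have hl := hloopfree e
      by_cases h1 : src e = a <;> by_cases h2 : tgt e = a <;>
        by_cases h3 : src e = b <;> by_cases h4 : tgt e = b <;> simp_all [eq_comm]
  have hsub : coneMesh src tgt - 1 = (coneY src tgt)ᵀ * coneY src tgt := by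
    rw [part1, add_sub_cancel_left]
  have part3 : Polynomial.X ^ n * (coneMesh src tgt - 1).charpoly
      = Polynomial.X ^ m * (LapDegAdj src tgt).charpoly := by
    rw [hsub, ← part2, hn, hm]
    exact key_poly (coneY src tgt) (coneY src tgt)ᵀ
  refine ⟨part1, part2, part3, ?_⟩
  intro μ hμ
  rw [mem_spectrum_iff_charpoly, mem_spectrum_iff_charpoly]
  have hmap1 : ((coneMesh src tgt - 1).map (Int.cast : ℤ → ℂ)).charpoly
      = ((coneMesh src tgt - 1).charpoly).map (Int.castRingHom ℂ) :=
    Matrix.charpoly_map _ (Int.castRingHom ℂ)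
  have hmap2 : ((LapDegAdj src tgt).map (Int.cast : ℤ → ℂ)).charpoly
      = ((LapDegAdj src tgt).charpoly).map (Int.castRingHom ℂ) :=
    Matrix.charpoly_map _ (Int.castRingHom ℂ)
  have key := congrArg (fun p : Polynomial ℤ =>
    Polynomial.eval μ (p.map (Int.castRingHom ℂ))) part3
  simp only [Polynomial.map_mul, Polynomial.map_pow, Polynomial.map_X, Polynomial.eval_mul,
    Polynomial.eval_pow, Polynomial.eval_X] at key
  rw [hmap1, hmap2]
  have hn0 : μ ^ n ≠ 0 := pow_ne_zero _ hμ
  have hm0 : μ ^ m ≠ 0 := pow_ne_zero _ hμ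
  constructor
  · intro h0
    rw [h0, mul_zero] at key
    exact (mul_eq_zero.mp key.symm).resolve_left hm0
  · intro h0
    rw [h0, mul_zero] at key
    exact (mul_eq_zero.mp key).resolve_left hn0


end Mesh
end

section
/- Let G be a finite connected multigraph with spanning tree T0 and N = |E(G)−E(T0)|, and for 0 ≤ j ≤ N let b_j be the sum, over all subsets {k_1 < … < k_j} of {1,…,N} of size j, of the number of spanning trees of the subgraph T0 ∪ {e_{k_1},…,e_{k_j}}. Then for every 0 ≤ j ≤ N: b_j = Σ_{k=0}^{j} binom(N−k, N−j) · ST_k(G,T0). -/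
open scoped Classical
open Polynomial BigOperators Matrix

namespace Mesh

variable {V E : Type}

open Finset in
/-- Number of `j`-element subsets of a finite type containing a fixed `t`. -/
private lemma count_supersets {α : Type*} [Fintype α] [DecidableEq α] (t : Finset α) (j : ℕ)
    (h : t.card ≤ j) :
    (((Finset.univ : Finset α).powersetCard j).filter (fun K => t ⊆ K)).card
      = (Fintype.card α - t.card).choose (j - t.card) := by
  classical
  rw [← Finset.card_compl t, ← Finset.card_powersetCard]
  apply Finset.card_bij (fun K _ => K \ t)
  · intro K hK
    simp only [mem_filter, mem_powersetCard] at hK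
    rw [mem_powersetCard]
    constructor
    · intro x hx
      simp only [mem_sdiff] at hx
      simp [hx.2]
    · rw [card_sdiff_of_subset hK.2, hK.1.2]
  · intro K1 h1 K2 h2 he
    simp only [mem_filter] at h1 h2
    have : K1 \ t ∪ t = K2 \ t ∪ t := by rw [he]
    rwa [Finset.sdiff_union_of_subset h1.2, Finset.sdiff_union_of_subset h2.2] at this
  · intro A hA
    rw [mem_powersetCard] at hA
    have hd : Disjoint A t := by
      rw [Finset.disjoint_left]; intro a ha hat
      exact (mem_compl.1 (hA.1 ha)) hat
    refine ⟨A ∪ t, ?_, ?_⟩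
    · simp only [mem_filter, mem_powersetCard]
      exact ⟨⟨subset_univ _, by rw [card_union_of_disjoint hd, hA.2, Nat.sub_add_cancel h]⟩,
        subset_union_right⟩
    · rw [union_sdiff_right, sdiff_eq_self_of_disjoint hd]

/-- With `b_j` the sum, over all `j`-element subsets `K` of the non-tree
edges, of the number of spanning trees of the subgraph `T0 ∪ K`, one has
`b_j = Σ_{k=0}^{j} C(N-k, N-j) · ST_k(G,T0)` for all `0 ≤ j ≤ N`. -/
theorem stmt10 {V E : Type} [Fintype V] [Fintype E] [DecidableEq V] [DecidableEq E]
    (src tgt : E → V) (hG : ConnectedVia src tgt Finset.univ)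
    (T0 : Finset E) (hT0 : IsSpanningTree src tgt T0)
    (N : ℕ) (hN : N = Fintype.card {e : E // e ∉ T0}) :
    ∀ j : ℕ, j ≤ N →
      (∑ K ∈ Finset.powersetCard j (Finset.univ : Finset {e : E // e ∉ T0}),
          Nat.card {S : Finset E // IsSpanningTree src tgt S ∧ S ⊆ T0 ∪ K.image Subtype.val})
        = ∑ k ∈ Finset.range (j + 1), Nat.choose (N - k) (N - j) * STj src tgt T0 k := by
  classical
  intro j hj
  -- abbreviations
  set P := Finset.powersetCard j (Finset.univ : Finset {e : E // e ∉ T0}) with hP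
  -- the finset of non-tree edges of S, as a finset of the subtype
  let σ : Finset E → Finset {e : E // e ∉ T0} := fun S => (S \ T0).subtype (fun e => e ∉ T0)
  have hσcard : ∀ S : Finset E, (σ S).card = (S \ T0).card := by
    intro S
    rw [← Finset.card_map (f := Function.Embedding.subtype _), Finset.subtype_map]
    congr 1
    apply Finset.filter_true_of_mem
    intro x hx
    exact (Finset.mem_sdiff.1 hx).2
  have hσle : ∀ S : Finset E, (σ S).card ≤ N := by
    intro S
    rw [hN, ← Finset.card_univ]
    exact Finset.card_le_card (Finset.subset_univ _)
  -- membership condition translation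
  have hsub : ∀ (S : Finset E) (K : Finset {e : E // e ∉ T0}),
      (S ⊆ T0 ∪ K.image Subtype.val) ↔ σ S ⊆ K := by
    intro S K
    constructor
    · intro h x hx
      have hx' : (x : E) ∈ S \ T0 := by
        have := Finset.mem_subtype.1 hx
        exact this
      have hxS : (x : E) ∈ S := (Finset.mem_sdiff.1 hx').1
      rcases Finset.mem_union.1 (h hxS) with h1 | h1
      · exact absurd h1 x.2
      · rcases Finset.mem_image.1 h1 with ⟨y, hy, hyx⟩
        rwa [← Subtype.ext hyx.symm] at hy
    · intro h e he
      by_cases heT : e ∈ T0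
      · exact Finset.mem_union.2 (Or.inl heT)
      · have : (⟨e, heT⟩ : {e : E // e ∉ T0}) ∈ σ S :=
          Finset.mem_subtype.2 (Finset.mem_sdiff.2 ⟨he, heT⟩)
        exact Finset.mem_union.2 (Or.inr (Finset.mem_image.2 ⟨⟨e, heT⟩, h this, rfl⟩))
  -- Nat.card of a subtype of Finset E as a sum of indicators
  have hNatcard : ∀ (p : Finset E → Prop), Nat.card {S : Finset E // p S}
      = ∑ S : Finset E, if p S then 1 else 0 := by
    intro p
    rw [Nat.card_eq_fintype_card, Fintype.card_subtype, Finset.card_filter]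
  -- rewrite the LHS as a double sum and swap
  have hLHS : (∑ K ∈ P,
      Nat.card {S : Finset E // IsSpanningTree src tgt S ∧ S ⊆ T0 ∪ K.image Subtype.val})
      = ∑ S : Finset E, if IsSpanningTree src tgt S
          then Nat.choose (N - (S \ T0).card) (N - j) else 0 := by
    calc (∑ K ∈ P,
        Nat.card {S : Finset E // IsSpanningTree src tgt S ∧ S ⊆ T0 ∪ K.image Subtype.val})
        = ∑ K ∈ P, ∑ S : Finset E,
            if IsSpanningTree src tgt S ∧ S ⊆ T0 ∪ K.image Subtype.val then 1 else 0 := by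
          refine Finset.sum_congr rfl fun K _ => ?_
          rw [hNatcard]
          exact Finset.sum_congr rfl fun S _ => by split_ifs <;> rfl
      _ = ∑ S : Finset E, ∑ K ∈ P,
            if IsSpanningTree src tgt S ∧ S ⊆ T0 ∪ K.image Subtype.val then 1 else 0 :=
          Finset.sum_comm
      _ = ∑ S : Finset E, if IsSpanningTree src tgt S
            then Nat.choose (N - (S \ T0).card) (N - j) else 0 := by
          apply Finset.sum_congr rfl
          intro S _
          by_cases hs : IsSpanningTree src tgt S
          · simp only [hs, true_and, if_true]
            have : (∑ K ∈ P, if S ⊆ T0 ∪ K.image Subtype.val then 1 else 0)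
                = (P.filter (fun K => σ S ⊆ K)).card := by
              rw [Finset.card_filter]
              exact Finset.sum_congr rfl fun K _ => by
                simp only [hsub S K]
            rw [this]
            by_cases hkj : (σ S).card ≤ j
            · rw [hP, count_supersets _ _ hkj, ← hN, hσcard]
              have h1 : (S \ T0).card ≤ j := (hσcard S) ▸ hkj
              have h2 : (S \ T0).card ≤ N := (hσcard S) ▸ hσle S
              rw [eq_comm,
                show N - j = (N - (S \ T0).card) - (j - (S \ T0).card) by omega]
              exact Nat.choose_symm (by omega)
            · have h1 : (P.filter (fun K => σ S ⊆ K)).card = 0 := by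
                rw [Finset.card_eq_zero, Finset.filter_eq_empty_iff]
                intro K hK
                rw [hP, Finset.mem_powersetCard] at hK
                intro hcon
                exact hkj (hK.2 ▸ Finset.card_le_card hcon)
              rw [h1, eq_comm, Nat.choose_eq_zero_of_lt]
              have := hσle S
              rw [hσcard] at *
              omega
          · simp [hs]
  rw [hLHS]
  -- now group the spanning trees by the number of their non-tree edges
  have hSTj : ∀ k : ℕ, STj src tgt T0 k
      = ((Finset.univ.filter (fun S => IsSpanningTree src tgt S)).filter
          (fun S => (S \ T0).card = k)).card := by
    intro k
    rw [STj, Nat.card_eq_fintype_card, Fintype.card_subtype, Finset.filter_filter]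
  have key : (∑ S : Finset E, if IsSpanningTree src tgt S
        then Nat.choose (N - (S \ T0).card) (N - j) else 0)
      = ∑ k ∈ Finset.range (N + 1), Nat.choose (N - k) (N - j) * STj src tgt T0 k := by
    rw [← Finset.sum_filter]
    rw [← Finset.sum_fiberwise_of_maps_to' (g := fun S => (S \ T0).card)
      (t := Finset.range (N + 1)) (f := fun k => Nat.choose (N - k) (N - j)) ?_]
    · apply Finset.sum_congr rfl
      intro k _
      rw [hSTj k, Finset.sum_const, smul_eq_mul, mul_comm]
    · intro S hS
      have := hσle S
      rw [hσcard] at this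
      simpa using Nat.lt_succ_of_le this
  rw [key]
  -- terms with j < k ≤ N vanish
  rw [eq_comm]
  apply Finset.sum_subset
  · intro k hk
    rw [Finset.mem_range] at *
    omega
  · intro k hk1 hk2
    rw [Finset.mem_range] at *
    have : N - k < N - j := by omega
    rw [Nat.choose_eq_zero_of_lt this, zero_mul]

end Mesh
end
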